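/- arXiv:2001.01154 — 9 statements merged into one kernel-verified Lean document; each statement's English description precedes it below -/
import Mathlib

section
/- Triangle inequality for upper angles (Proposition 2.1). Let X be a metric space and let γ : [0,T] → X, η : [0,S] → X, σ : [0,R] → X be unit-speed geodesics with T, S, R > 0 and γ(0) = η(0) = σ(0). Then ∠⁺(γ, η) ≤ ∠⁺(γ, σ) + ∠⁺(σ, η). (The paper states this for length spaces, but only the metric structure is used.) -/
open Filter Topology Metric Set

noncomputable section

/-- `γ` is a unit-speed geodesic (shortest path) on the interval `[0, T]`:
the distance between any two of its points equals the parameter difference. -/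
def IsUnitSpeedGeodesicOn {X : Type*} [MetricSpace X] (γ : ℝ → X) (T : ℝ) : Prop :=
  ∀ t ∈ Set.Icc (0:ℝ) T, ∀ t' ∈ Set.Icc (0:ℝ) T, dist (γ t) (γ t') = |t - t'|

/-- The Euclidean comparison angle `∠⁰_p(x, y)` at the vertex `p`. -/
def compAngle {X : Type*} [MetricSpace X] (p x y : X) : ℝ :=
  Real.arccos ((dist p x ^ 2 + dist p y ^ 2 - dist x y ^ 2) /
    (2 * dist p x * dist p y))

/-- The upper angle `∠⁺(γ, η)` between two geodesics with `γ 0 = η 0`: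
the limsup of comparison angles `∠⁰_{γ 0}(γ t, η s)` as `(t, s) → (0⁺, 0⁺)`. -/
def upperAngle {X : Type*} [MetricSpace X] (γ η : ℝ → X) : ℝ :=
  Filter.limsup (fun ts : ℝ × ℝ => compAngle (γ 0) (γ ts.1) (η ts.2))
    ((𝓝[>] (0:ℝ)) ×ˢ (𝓝[>] (0:ℝ)))

/-- The lower angle `∠⁻(γ, η)`: liminf of comparison angles. -/
def lowerAngle {X : Type*} [MetricSpace X] (γ η : ℝ → X) : ℝ :=
  Filter.liminf (fun ts : ℝ × ℝ => compAngle (γ 0) (γ ts.1) (η ts.2))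
    ((𝓝[>] (0:ℝ)) ×ˢ (𝓝[>] (0:ℝ)))

/-- `U` is a region of curvature bounded by `0` in the comparison sense, where
`rel` is `≤` (curvature `≤ 0`) or `≥` (curvature `≥ 0`): any two points of `U`
are joined by a unit-speed shortest path with image in `U`, and for every
geodesic triangle contained in `U` and every Euclidean comparison triangle,
distances between pairs of points on the sides are related by `rel` to the
distances between the corresponding comparison points. -/
def IsCurvRegion {X : Type*} [MetricSpace X] (rel : ℝ → ℝ → Prop) (U : Set X) : Prop :=
  (∀ x ∈ U, ∀ y ∈ U, ∃ γ : ℝ → X, IsUnitSpeedGeodesicOn γ (dist x y) ∧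
    γ 0 = x ∧ γ (dist x y) = y ∧ ∀ t ∈ Set.Icc (0:ℝ) (dist x y), γ t ∈ U) ∧
  (∀ x ∈ U, ∀ y ∈ U, ∀ z ∈ U, ∀ p : Fin 3 → ℝ → X,
    (∀ i, IsUnitSpeedGeodesicOn (p i) (![dist x y, dist x z, dist y z] i) ∧
      p i 0 = (![(x, y), (x, z), (y, z)] i).1 ∧
      p i (![dist x y, dist x z, dist y z] i) = (![(x, y), (x, z), (y, z)] i).2 ∧
      ∀ t ∈ Set.Icc (0:ℝ) (![dist x y, dist x z, dist y z] i), p i t ∈ U) →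
    ∀ xb yb zb : EuclideanSpace ℝ (Fin 2),
      dist xb yb = dist x y → dist xb zb = dist x z → dist yb zb = dist y z →
      ∀ i j : Fin 3, ∀ a b : ℝ,
        a ∈ Set.Icc (0:ℝ) (![dist x y, dist x z, dist y z] i) →
        b ∈ Set.Icc (0:ℝ) (![dist x y, dist x z, dist y z] j) →
        rel (dist (p i a) (p j b))
          (dist
            (![fun c : ℝ => AffineMap.lineMap xb yb (c / dist x y),
               fun c : ℝ => AffineMap.lineMap xb zb (c / dist x z),
               fun c : ℝ => AffineMap.lineMap yb zb (c / dist y z)] i a)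
            (![fun c : ℝ => AffineMap.lineMap xb yb (c / dist x y),
               fun c : ℝ => AffineMap.lineMap xb zb (c / dist x z),
               fun c : ℝ => AffineMap.lineMap yb zb (c / dist y z)] j b)))

/-- A region of curvature `≤ 0`. -/
def IsCurvLeRegion {X : Type*} [MetricSpace X] (U : Set X) : Prop :=
  IsCurvRegion (· ≤ ·) U

/-- A region of curvature `≥ 0`. -/
def IsCurvGeRegion {X : Type*} [MetricSpace X] (U : Set X) : Prop :=
  IsCurvRegion (· ≥ ·) U

end

section Aux

open Real

private lemma abs_sub_cexp' (x y u v : ℝ) :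
    ‖(x:ℂ) * Complex.exp (u * Complex.I) - (y:ℂ) * Complex.exp (v * Complex.I)‖ =
      Real.sqrt (x^2 + y^2 - 2*x*y*Real.cos (u - v)) := by
  rw [Complex.norm_def, Complex.normSq_apply]
  congr 1
  simp only [Complex.exp_mul_I, Complex.sub_re, Complex.sub_im, Complex.mul_re, Complex.mul_im,
    Complex.add_re, Complex.add_im, Complex.cos_ofReal_re, Complex.sin_ofReal_re,
    Complex.cos_ofReal_im, Complex.sin_ofReal_im, Complex.I_re, Complex.I_im,
    Complex.ofReal_re, Complex.ofReal_im, Real.cos_sub]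
  nlinarith [Real.sin_sq_add_cos_sq u, Real.sin_sq_add_cos_sq v]

private lemma cevian' (a b t s : ℝ) (ha : 0 < a) (hb : 0 < b) (hab : a + b < Real.pi)
    (ht : 0 < t) (hs : 0 < s) :
    ∃ r : ℝ, 0 < r ∧ r ≤ max t s ∧
      Real.sqrt (t^2 + s^2 - 2*t*s*Real.cos (a+b)) =
        Real.sqrt (t^2 + r^2 - 2*t*r*Real.cos a) +
        Real.sqrt (r^2 + s^2 - 2*r*s*Real.cos b) := by
  set c := a + b with hc
  have hsa : 0 < Real.sin a := Real.sin_pos_of_pos_of_lt_pi ha (by linarith)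
  have hsb : 0 < Real.sin b := Real.sin_pos_of_pos_of_lt_pi hb (by linarith)
  have hsc : 0 < Real.sin c := Real.sin_pos_of_pos_of_lt_pi (by positivity) hab
  set D := t * Real.sin a + s * Real.sin b with hD
  have hD0 : 0 < D := by positivity
  set μ := t * Real.sin a / D with hμ
  set r := t * s * Real.sin c / D with hr
  have hr0 : 0 < r := by positivity
  have hμ0 : 0 ≤ μ := by positivity
  have hμ1 : μ ≤ 1 := by
    rw [hμ, div_le_one hD0]; nlinarith
  set A : ℂ := (t : ℂ) with hA
  set B : ℂ := (s : ℂ) * Complex.exp (c * Complex.I) with hB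
  set W : ℂ := (r : ℂ) * Complex.exp (a * Complex.I) with hW
  have key : W = ((1 - μ : ℝ) : ℂ) * A + ((μ : ℝ) : ℂ) * B := by
    rw [hW, hA, hB]
    apply Complex.ext
    · simp [Complex.exp_mul_I, Complex.mul_re, Complex.mul_im, Complex.cos_ofReal_re,
        Complex.sin_ofReal_re, hr, hμ]
      field_simp
      have : Real.sin c * Real.cos a - Real.cos c * Real.sin a = Real.sin b := by
        rw [← Real.sin_sub]; congr 1; rw [hc]; ring
      rw [hD]; linear_combination s * this
    · simp [Complex.exp_mul_I, Complex.mul_re, Complex.mul_im, Complex.cos_ofReal_re,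
        Complex.sin_ofReal_re, hr, hμ]
      field_simp
  have hexp0 : (Complex.exp ((0:ℝ) * Complex.I)) = 1 := by simp
  have habAB : ‖A - B‖ = Real.sqrt (t^2 + s^2 - 2*t*s*Real.cos c) := by
    have : A - B = (t:ℂ) * Complex.exp ((0:ℝ) * Complex.I) - (s:ℂ) * Complex.exp (c * Complex.I) := by
      rw [hexp0]; simp [hA, hB]
    rw [this, abs_sub_cexp']
    norm_num [Real.cos_neg]
  have habAW : ‖A - W‖ = Real.sqrt (t^2 + r^2 - 2*t*r*Real.cos a) := by
    have : A - W = (t:ℂ) * Complex.exp ((0:ℝ) * Complex.I) - (r:ℂ) * Complex.exp (a * Complex.I) := by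
      rw [hexp0]; simp [hA, hW]
    rw [this, abs_sub_cexp']
    norm_num [Real.cos_neg]
  have habWB : ‖W - B‖ = Real.sqrt (r^2 + s^2 - 2*r*s*Real.cos b) := by
    rw [hW, hB, abs_sub_cexp']
    have : a - c = -b := by rw [hc]; ring
    rw [this, Real.cos_neg]
  have h1 : A - W = ((μ:ℝ):ℂ) * (A - B) := by rw [key]; push_cast; ring
  have h2 : W - B = ((1 - μ:ℝ):ℂ) * (A - B) := by rw [key]; push_cast; ring
  have e1 : ‖A - W‖ = μ * ‖A - B‖ := by
    rw [h1, norm_mul, Complex.norm_real, Real.norm_eq_abs, _root_.abs_of_nonneg hμ0]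
  have e2 : ‖W - B‖ = (1 - μ) * ‖A - B‖ := by
    rw [h2, norm_mul, Complex.norm_real, Real.norm_eq_abs, _root_.abs_of_nonneg (by linarith)]
  have habW : ‖W‖ = r := by
    rw [hW, norm_mul, Complex.norm_real, Real.norm_eq_abs, Complex.norm_exp_ofReal_mul_I, _root_.abs_of_pos hr0,
      mul_one]
  have habB : ‖B‖ = s := by
    rw [hB, norm_mul, Complex.norm_real, Real.norm_eq_abs, Complex.norm_exp_ofReal_mul_I, _root_.abs_of_pos hs,
      mul_one]
  refine ⟨r, hr0, ?_, ?_⟩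
  · have : ‖W‖ ≤ (1 - μ) * t + μ * s := by
      rw [key]
      refine le_trans (norm_add_le _ _) ?_
      rw [norm_mul, norm_mul, Complex.norm_real, Real.norm_eq_abs, Complex.norm_real, Real.norm_eq_abs, Complex.norm_real, Real.norm_eq_abs, habB,
        _root_.abs_of_nonneg (by linarith : (0:ℝ) ≤ 1 - μ), _root_.abs_of_nonneg hμ0,
        _root_.abs_of_pos ht]
    rw [habW] at this
    nlinarith [le_max_left t s, le_max_right t s]
  · rw [← habAB, ← habAW, ← habWB, e1, e2]
    ring

private lemma compAngle_nonneg' {X : Type*} [MetricSpace X] (p x y : X) :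
    0 ≤ compAngle p x y := Real.arccos_nonneg _

private lemma compAngle_le_pi' {X : Type*} [MetricSpace X] (p x y : X) :
    compAngle p x y ≤ Real.pi := Real.arccos_le_pi _

private lemma dist_lt_of_compAngle_lt {X : Type*} [MetricSpace X] {p x y : X} {θ dx dy : ℝ}
    (hdx : dist p x = dx) (hdy : dist p y = dy) (hx : 0 < dx) (hy : 0 < dy)
    (hθπ : θ ≤ Real.pi) (h : compAngle p x y < θ) :
    dist x y < Real.sqrt (dx^2 + dy^2 - 2*dx*dy*Real.cos θ) := by
  set d := dist x y with hd
  have htri1 : d ≤ dx + dy := by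
    rw [hd, ← hdx, ← hdy, dist_comm p x]; exact dist_triangle x p y
  have htri2 : dx ≤ dy + d := by
    rw [← hdx, ← hdy, hd, dist_comm x y]; exact dist_triangle p y x
  have htri3 : dy ≤ dx + d := by
    rw [← hdx, ← hdy, hd]; exact dist_triangle p x y
  set q := (dx^2 + dy^2 - d^2) / (2 * dx * dy) with hq
  have h2 : 0 < 2 * dx * dy := by positivity
  have hq1 : -1 ≤ q := by
    rw [hq, le_div_iff₀ h2]; nlinarith
  have hq2 : q ≤ 1 := by
    rw [hq, div_le_one h2]; nlinarith
  have hangle : Real.arccos q < θ := by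
    have : compAngle p x y = Real.arccos q := by
      rw [compAngle, hdx, hdy, ← hd, hq]
    rwa [this] at h
  have hcos : Real.cos θ < q := by
    have := Real.strictAntiOn_cos ⟨Real.arccos_nonneg q, Real.arccos_le_pi q⟩
      ⟨le_of_lt (lt_of_le_of_lt (Real.arccos_nonneg q) hangle), hθπ⟩ hangle
    rwa [Real.cos_arccos hq1 hq2] at this
  have hdsq : d^2 < dx^2 + dy^2 - 2*dx*dy*Real.cos θ := by
    rw [hq, lt_div_iff₀ h2] at hcos
    nlinarith
  calc d = Real.sqrt (d^2) := (Real.sqrt_sq dist_nonneg).symm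
    _ < _ := Real.sqrt_lt_sqrt (sq_nonneg d) hdsq

private lemma sqrt_lt_dist_of_lt_compAngle {X : Type*} [MetricSpace X] {p x y : X} {θ dx dy : ℝ}
    (hdx : dist p x = dx) (hdy : dist p y = dy) (hx : 0 < dx) (hy : 0 < dy)
    (hθ0 : 0 ≤ θ) (h : θ < compAngle p x y) :
    Real.sqrt (dx^2 + dy^2 - 2*dx*dy*Real.cos θ) < dist x y := by
  set d := dist x y with hd
  have htri1 : d ≤ dx + dy := by
    rw [hd, ← hdx, ← hdy, dist_comm p x]; exact dist_triangle x p y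
  have htri2 : dx ≤ dy + d := by
    rw [← hdx, ← hdy, hd, dist_comm x y]; exact dist_triangle p y x
  have htri3 : dy ≤ dx + d := by
    rw [← hdx, ← hdy, hd]; exact dist_triangle p x y
  set q := (dx^2 + dy^2 - d^2) / (2 * dx * dy) with hq
  have h2 : 0 < 2 * dx * dy := by positivity
  have hq1 : -1 ≤ q := by
    rw [hq, le_div_iff₀ h2]; nlinarith
  have hq2 : q ≤ 1 := by
    rw [hq, div_le_one h2]; nlinarith
  have hangle : θ < Real.arccos q := by
    have : compAngle p x y = Real.arccos q := by
      rw [compAngle, hdx, hdy, ← hd, hq]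
    rwa [this] at h
  have hcos : q < Real.cos θ := by
    have := Real.strictAntiOn_cos ⟨hθ0, le_of_lt (lt_of_lt_of_le hangle (Real.arccos_le_pi q))⟩
      ⟨Real.arccos_nonneg q, Real.arccos_le_pi q⟩ hangle
    rwa [Real.cos_arccos hq1 hq2] at this
  have hdsq : dx^2 + dy^2 - 2*dx*dy*Real.cos θ < d^2 := by
    rw [hq, div_lt_iff₀ h2] at hcos
    nlinarith
  have hX0 : 0 ≤ dx^2 + dy^2 - 2*dx*dy*Real.cos θ := by
    nlinarith [sq_nonneg (dx - dy), mul_nonneg (le_of_lt h2) (sub_nonneg.2 (Real.cos_le_one θ))]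
  have hd0 : 0 < d := by nlinarith
  exact (Real.sqrt_lt' hd0).2 hdsq

end Aux

/-- Proposition 2.1: triangle inequality for upper angles. -/
theorem upperAngle_triangle_inequality {X : Type*} [MetricSpace X]
    {T S R : ℝ} (hT : 0 < T) (hS : 0 < S) (hR : 0 < R)
    (γ η σ : ℝ → X)
    (hγ : IsUnitSpeedGeodesicOn γ T) (hη : IsUnitSpeedGeodesicOn η S)
    (hσ : IsUnitSpeedGeodesicOn σ R)
    (hγη : γ 0 = η 0) (hγσ : γ 0 = σ 0) :
    upperAngle γ η ≤ upperAngle γ σ + upperAngle σ η := by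
  classical
  simp only [upperAngle]
  set Fq := fun ts : ℝ × ℝ => compAngle (γ 0) (γ ts.1) (η ts.2) with hFq
  set Gq := fun ts : ℝ × ℝ => compAngle (γ 0) (γ ts.1) (σ ts.2) with hGq
  set Hq := fun ts : ℝ × ℝ => compAngle (σ 0) (σ ts.1) (η ts.2) with hHq
  have bndF_le : Filter.IsBoundedUnder (· ≤ ·) ((𝓝[>] (0:ℝ)) ×ˢ (𝓝[>] (0:ℝ)))
      Fq :=
    Filter.isBoundedUnder_of ⟨Real.pi, fun x => compAngle_le_pi' _ _ _⟩
  have bndF_ge : Filter.IsBoundedUnder (· ≥ ·) ((𝓝[>] (0:ℝ)) ×ˢ (𝓝[>] (0:ℝ)))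
      Fq :=
    Filter.isBoundedUnder_of ⟨0, fun x => compAngle_nonneg' _ _ _⟩
  have bndG_le : Filter.IsBoundedUnder (· ≤ ·) ((𝓝[>] (0:ℝ)) ×ˢ (𝓝[>] (0:ℝ)))
      Gq :=
    Filter.isBoundedUnder_of ⟨Real.pi, fun x => compAngle_le_pi' _ _ _⟩
  have bndH_le : Filter.IsBoundedUnder (· ≤ ·) ((𝓝[>] (0:ℝ)) ×ˢ (𝓝[>] (0:ℝ)))
      Hq :=
    Filter.isBoundedUnder_of ⟨Real.pi, fun x => compAngle_le_pi' _ _ _⟩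
  have hθπ : Filter.limsup Fq ((𝓝[>] (0:ℝ)) ×ˢ (𝓝[>] (0:ℝ))) ≤ Real.pi :=
    Filter.limsup_le_of_le bndF_ge.isCoboundedUnder_le
      (Filter.Eventually.of_forall fun x => compAngle_le_pi' _ _ _)
  have hα0 : 0 ≤ Filter.limsup Gq ((𝓝[>] (0:ℝ)) ×ˢ (𝓝[>] (0:ℝ))) :=
    Filter.le_limsup_of_frequently_le
      ((Filter.Eventually.of_forall fun x : ℝ × ℝ => compAngle_nonneg' (γ 0) (γ x.1) (σ x.2)).frequently)
      bndG_le
  have hβ0 : 0 ≤ Filter.limsup Hq ((𝓝[>] (0:ℝ)) ×ˢ (𝓝[>] (0:ℝ))) :=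
    Filter.le_limsup_of_frequently_le
      ((Filter.Eventually.of_forall fun x : ℝ × ℝ => compAngle_nonneg' (σ 0) (σ x.1) (η x.2)).frequently)
      bndH_le
  by_contra hcon
  push_neg at hcon
  set α := Filter.limsup Gq ((𝓝[>] (0:ℝ)) ×ˢ (𝓝[>] (0:ℝ))) with hαdef
  set β := Filter.limsup Hq ((𝓝[>] (0:ℝ)) ×ˢ (𝓝[>] (0:ℝ))) with hβdef
  set ε := (Filter.limsup Fq ((𝓝[>] (0:ℝ)) ×ˢ (𝓝[>] (0:ℝ))) - α - β) / 3 with hεdef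
  have hε : 0 < ε := by rw [hεdef]; linarith
  set a := α + ε with hadef
  set b := β + ε with hbdef
  have ha : 0 < a := by rw [hadef]; linarith
  have hb : 0 < b := by rw [hbdef]; linarith
  have habθ : a + b < Filter.limsup Fq ((𝓝[>] (0:ℝ)) ×ˢ (𝓝[>] (0:ℝ))) := by rw [hadef, hbdef, hεdef]; linarith
  have habπ : a + b < Real.pi := lt_of_lt_of_le habθ hθπ
  have h1 : ∀ᶠ x : ℝ × ℝ in (𝓝[>] (0:ℝ)) ×ˢ (𝓝[>] (0:ℝ)),
      Gq x < a :=
    Filter.eventually_lt_of_limsup_lt (by rw [hadef]; linarith) bndG_le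
  have h2 : ∀ᶠ x : ℝ × ℝ in (𝓝[>] (0:ℝ)) ×ˢ (𝓝[>] (0:ℝ)),
      Hq x < b :=
    Filter.eventually_lt_of_limsup_lt (by rw [hbdef]; linarith) bndH_le
  have h3 : ∃ᶠ x : ℝ × ℝ in (𝓝[>] (0:ℝ)) ×ˢ (𝓝[>] (0:ℝ)),
      a + b < Fq x := by
    by_contra hno
    rw [Filter.not_frequently] at hno
    simp only [not_lt] at hno
    have := Filter.limsup_le_of_le bndF_ge.isCoboundedUnder_le hno
    have : Filter.limsup Fq ((𝓝[>] (0:ℝ)) ×ˢ (𝓝[>] (0:ℝ))) ≤ a + b := this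
    linarith
  have hbasis := (nhdsGT_basis (0:ℝ)).prod (nhdsGT_basis (0:ℝ))
  rw [hbasis.eventually_iff] at h1 h2
  obtain ⟨⟨δ1, δ2⟩, ⟨hδ1, hδ2⟩, H1⟩ := h1
  obtain ⟨⟨δ3, δ4⟩, ⟨hδ3, hδ4⟩, H2⟩ := h2
  set δ := min (min (min δ1 δ2) (min δ3 δ4)) (min (min T S) R) with hδdef
  have hδ0 : 0 < δ :=
    lt_min (lt_min (lt_min hδ1 hδ2) (lt_min hδ3 hδ4)) (lt_min (lt_min hT hS) hR)
  have hδδ1 : δ ≤ δ1 := (min_le_left _ _).trans ((min_le_left _ _).trans (min_le_left _ _))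
  have hδδ2 : δ ≤ δ2 := (min_le_left _ _).trans ((min_le_left _ _).trans (min_le_right _ _))
  have hδδ3 : δ ≤ δ3 := (min_le_left _ _).trans ((min_le_right _ _).trans (min_le_left _ _))
  have hδδ4 : δ ≤ δ4 := (min_le_left _ _).trans ((min_le_right _ _).trans (min_le_right _ _))
  have hδT : δ ≤ T := (min_le_right _ _).trans ((min_le_left _ _).trans (min_le_left _ _))
  have hδS : δ ≤ S := (min_le_right _ _).trans ((min_le_left _ _).trans (min_le_right _ _))
  have hδR : δ ≤ R := (min_le_right _ _).trans (min_le_right _ _)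
  have hmem : Set.Ioo (0:ℝ) δ ∈ 𝓝[>] (0:ℝ) := Ioo_mem_nhdsGT_of_mem ⟨le_refl 0, hδ0⟩
  have hev : ∀ᶠ x : ℝ × ℝ in (𝓝[>] (0:ℝ)) ×ˢ (𝓝[>] (0:ℝ)),
      x.1 ∈ Set.Ioo (0:ℝ) δ ∧ x.2 ∈ Set.Ioo (0:ℝ) δ :=
    Filter.eventually_of_mem (Filter.prod_mem_prod hmem hmem) fun x hx => hx
  obtain ⟨⟨t, s⟩, hFts, ⟨ht0, htδ⟩, hs0, hsδ⟩ := (h3.and_eventually hev).exists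
  obtain ⟨r, hr0, hrmax, hkey⟩ := cevian' a b t s ha hb habπ ht0 hs0
  have hrδ : r < δ := lt_of_le_of_lt hrmax (max_lt htδ hsδ)
  have dγt : dist (γ 0) (γ t) = t := by
    have := hγ 0 ⟨le_refl 0, hT.le⟩ t ⟨ht0.le, htδ.le.trans hδT⟩
    rwa [zero_sub, abs_neg, _root_.abs_of_pos ht0] at this
  have dσr : dist (γ 0) (σ r) = r := by
    rw [hγσ]
    have := hσ 0 ⟨le_refl 0, hR.le⟩ r ⟨hr0.le, hrδ.le.trans hδR⟩
    rwa [zero_sub, abs_neg, _root_.abs_of_pos hr0] at this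
  have dηs : dist (γ 0) (η s) = s := by
    rw [hγη]
    have := hη 0 ⟨le_refl 0, hS.le⟩ s ⟨hs0.le, hsδ.le.trans hδS⟩
    rwa [zero_sub, abs_neg, _root_.abs_of_pos hs0] at this
  have dσr' : dist (σ 0) (σ r) = r := by rw [← hγσ]; exact dσr
  have dηs' : dist (σ 0) (η s) = s := by rw [← hγσ]; exact dηs
  have hG : Gq (t, r) < a :=
    H1 (Set.mk_mem_prod ⟨ht0, lt_of_lt_of_le htδ hδδ1⟩ ⟨hr0, lt_of_lt_of_le hrδ hδδ2⟩)
  have hH : Hq (r, s) < b :=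
    H2 (Set.mk_mem_prod ⟨hr0, lt_of_lt_of_le hrδ hδδ3⟩ ⟨hs0, lt_of_lt_of_le hsδ hδδ4⟩)
  simp only [hGq] at hG
  simp only [hHq] at hH
  simp only [hFq] at hFts
  have hd1 : dist (γ t) (σ r) < Real.sqrt (t^2 + r^2 - 2*t*r*Real.cos a) :=
    dist_lt_of_compAngle_lt dγt dσr ht0 hr0 (by linarith) hG
  have hd2 : dist (σ r) (η s) < Real.sqrt (r^2 + s^2 - 2*r*s*Real.cos b) :=
    dist_lt_of_compAngle_lt dσr' dηs' hr0 hs0 (by linarith) hH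
  have hd3 : Real.sqrt (t^2 + s^2 - 2*t*s*Real.cos (a+b)) < dist (γ t) (η s) :=
    sqrt_lt_dist_of_lt_compAngle dγt dηs ht0 hs0 (by linarith) hFts
  have htriangle : dist (γ t) (η s) ≤ dist (γ t) (σ r) + dist (σ r) (η s) :=
    dist_triangle _ _ _
  linarith [hkey, hd1, hd2, hd3, htriangle]
end

section
/- Thin-triangle cosine lemma, spherical case (Lemma 2.2, k > 0). Let X be a metric space, let γ : [0,T] → X and η : [0,S] → X be unit-speed geodesics with γ(0) = η(0), let k > 0, and fix s with 0 < s < π/√k and s ≤ S. Set d(t) := dist(γ(t), η(s)) and let cθ_k(t) := (cos(d(t)·√k) − cos(t·√k)·cos(s·√k)) / (sin(t·√k)·sin(s·√k)), which by the spherical law of cosines is the cosine of the comparison angle at γ(0) in the 2-sphere of curvature k. Then lim_{t→0⁺} | cθ_k(t) − (s − d(t))/t | = 0. -/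
open Filter Topology Metric Set

private lemma aux_sin_nonneg {x : ℝ} (h0 : 0 ≤ x) (h1 : x ≤ 1) :
    |Real.sin x - x| ≤ x ^ 3 / 4 := by
  rcases eq_or_lt_of_le h0 with h | h
  · simp [← h]
  · have h2 := Real.sin_lt h
    have h3 : x - x ^ 3 / 4 < Real.sin x := by
      have := Real.sin_gt_sub_cube h; linarith [pow_pos h 3]
    rw [abs_of_nonpos (by linarith)]
    linarith

private lemma aux_sin {x : ℝ} (h1 : |x| ≤ 1) : |Real.sin x - x| ≤ |x| ^ 3 / 4 := by
  rcases le_or_gt 0 x with h | h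
  · rw [abs_of_nonneg h] at h1 ⊢
    exact aux_sin_nonneg h h1
  · rw [abs_of_neg h] at h1 ⊢
    have key := aux_sin_nonneg (x := -x) (by linarith) h1
    rw [Real.sin_neg, show -Real.sin x - -x = -(Real.sin x - x) by ring, abs_neg] at key
    exact key

private lemma aux_cos (x : ℝ) : |Real.cos x - 1| ≤ x ^ 2 / 2 := by
  have h1 := Real.cos_le_one x
  have h2 := Real.one_sub_sq_div_two_le_cos (x := x)
  rw [abs_le]
  constructor <;> nlinarith [sq_nonneg x]

private lemma aux_sin_lb {x : ℝ} (h0 : 0 < x) (h1 : x ≤ 1) : x / 2 ≤ Real.sin x := by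
  have h2 : x - x ^ 3 / 4 < Real.sin x := by
    have := Real.sin_gt_sub_cube h0; linarith [pow_pos h0 3]
  have hx3 : x ^ 3 ≤ x := by
    nlinarith [mul_nonneg (mul_nonneg h0.le (by linarith : (0:ℝ) ≤ 1 - x))
      (by linarith : (0:ℝ) ≤ 1 + x)]
  linarith

set_option maxHeartbeats 1000000 in
/-- Lemma 2.2, spherical case (`k > 0`): the thin-triangle cosine lemma. -/
theorem thinTriangle_cosine_spherical {X : Type*} [MetricSpace X]
    {T S : ℝ} (hT : 0 < T)
    (γ η : ℝ → X)
    (hγ : IsUnitSpeedGeodesicOn γ T) (hη : IsUnitSpeedGeodesicOn η S)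
    (hγη : γ 0 = η 0)
    {k : ℝ} (hk : 0 < k)
    {s : ℝ} (hs0 : 0 < s) (hsk : s < Real.pi / Real.sqrt k) (hsS : s ≤ S) :
    Filter.Tendsto
      (fun t : ℝ =>
        |(Real.cos (dist (γ t) (η s) * Real.sqrt k)
            - Real.cos (t * Real.sqrt k) * Real.cos (s * Real.sqrt k))
            / (Real.sin (t * Real.sqrt k) * Real.sin (s * Real.sqrt k))
          - (s - dist (γ t) (η s)) / t|)
      (𝓝[>] (0:ℝ)) (𝓝 0) := by
  set K := Real.sqrt k with hKdef
  have hK0 : 0 < K := Real.sqrt_pos.mpr hk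
  have hsKpi : s * K < Real.pi := (lt_div_iff₀ hK0).mp hsk
  have hsinS : 0 < Real.sin (s * K) :=
    Real.sin_pos_of_pos_of_lt_pi (mul_pos hs0 hK0) hsKpi
  have hS0 : 0 ≤ S := le_trans hs0.le hsS
  set C : ℝ := 2 * K / Real.sin (s * K) + K with hC
  have hδ0 : 0 < min T (1 / K) := lt_min hT (by positivity)
  apply squeeze_zero' (g := fun t => C * t)
  · exact Filter.Eventually.of_forall fun t => abs_nonneg _
  · filter_upwards [Ioo_mem_nhdsGT_of_mem (Set.mem_Ico.mpr ⟨le_refl (0:ℝ), hδ0⟩)] with t ht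
    obtain ⟨ht0, htδ⟩ := ht
    have htT : t ≤ T := le_trans htδ.le (min_le_left _ _)
    have ha1 : t * K ≤ 1 := by
      have h1 : t < 1 / K := lt_of_lt_of_le htδ (min_le_right _ _)
      have := (lt_div_iff₀ hK0).mp h1
      linarith
    have ha0 : 0 < t * K := mul_pos ht0 hK0
    set d := dist (γ t) (η s) with hd
    have hd0 : 0 ≤ d := dist_nonneg
    have hds : dist (γ 0) (η s) = s := by
      rw [hγη, hη 0 ⟨le_refl 0, hS0⟩ s ⟨hs0.le, hsS⟩, zero_sub, abs_neg,
        abs_of_nonneg hs0.le]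
    have he : |d - s| ≤ t := by
      have h2 : dist (γ t) (γ 0) = t := by
        rw [hγ t ⟨ht0.le, htT⟩ 0 ⟨le_refl 0, hT.le⟩, sub_zero, abs_of_nonneg ht0.le]
      calc |d - s| = |dist (γ t) (η s) - dist (γ 0) (η s)| := by rw [hds, hd]
        _ ≤ dist (γ t) (γ 0) := abs_dist_sub_le _ _ _
        _ = t := h2
    have hbabs : |(d - s) * K| ≤ t * K := by
      rw [abs_mul, abs_of_nonneg hK0.le]
      exact mul_le_mul_of_nonneg_right he hK0.le
    have hb1 : |(d - s) * K| ≤ 1 := hbabs.trans ha1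
    have hsa : 0 < Real.sin (t * K) :=
      Real.sin_pos_of_pos_of_lt_pi ha0 (lt_of_le_of_lt ha1 (by linarith [Real.pi_gt_three]))
    have hsa_lb : t * K / 2 ≤ Real.sin (t * K) := aux_sin_lb ha0 ha1
    have hdK : Real.cos (d * K) =
        Real.cos (s * K) * Real.cos ((d - s) * K)
          - Real.sin (s * K) * Real.sin ((d - s) * K) := by
      rw [show d * K = s * K + (d - s) * K by ring, Real.cos_add]
    have key : (Real.cos (d * K) - Real.cos (t * K) * Real.cos (s * K))
          / (Real.sin (t * K) * Real.sin (s * K)) - (s - d) / t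
        = Real.cos (s * K) * (Real.cos ((d - s) * K) - Real.cos (t * K))
            / (Real.sin (t * K) * Real.sin (s * K))
          + ((d - s) * Real.sin (t * K) - t * Real.sin ((d - s) * K))
            / (t * Real.sin (t * K)) := by
      rw [hdK]
      field_simp [hsa.ne', hsinS.ne', ht0.ne']
      ring_nf
      simp only [mul_inv_cancel_right₀ hsa.ne']
    -- bound for the first term
    have hnum1 : |Real.cos (s * K) * (Real.cos ((d - s) * K) - Real.cos (t * K))|
        ≤ (t * K) ^ 2 := by
      rw [abs_mul]
      have h1 : |Real.cos (s * K)| ≤ 1 := Real.abs_cos_le_one _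
      have h2 : |Real.cos ((d - s) * K) - Real.cos (t * K)|
          ≤ ((d - s) * K) ^ 2 / 2 + (t * K) ^ 2 / 2 := by
        calc |Real.cos ((d - s) * K) - Real.cos (t * K)|
            = |(Real.cos ((d - s) * K) - 1) - (Real.cos (t * K) - 1)| := by ring_nf
          _ ≤ |Real.cos ((d - s) * K) - 1| + |Real.cos (t * K) - 1| := abs_sub _ _
          _ ≤ ((d - s) * K) ^ 2 / 2 + (t * K) ^ 2 / 2 :=
              add_le_add (aux_cos _) (aux_cos _)
      have hb2 : ((d - s) * K) ^ 2 ≤ (t * K) ^ 2 := by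
        nlinarith [sq_abs ((d - s) * K), abs_nonneg ((d - s) * K)]
      calc |Real.cos (s * K)| * |Real.cos ((d - s) * K) - Real.cos (t * K)|
          ≤ 1 * (((d - s) * K) ^ 2 / 2 + (t * K) ^ 2 / 2) :=
            mul_le_mul h1 h2 (abs_nonneg _) zero_le_one
        _ ≤ (t * K) ^ 2 := by nlinarith
    have hT1 : |Real.cos (s * K) * (Real.cos ((d - s) * K) - Real.cos (t * K))
          / (Real.sin (t * K) * Real.sin (s * K))| ≤ 2 * K / Real.sin (s * K) * t := by
      rw [abs_div, abs_of_pos (mul_pos hsa hsinS)]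
      have hden1 : t * K / 2 * Real.sin (s * K) ≤ Real.sin (t * K) * Real.sin (s * K) :=
        mul_le_mul_of_nonneg_right hsa_lb hsinS.le
      calc _ ≤ (t * K) ^ 2 / (t * K / 2 * Real.sin (s * K)) :=
            div_le_div₀ (sq_nonneg _) hnum1 (by positivity) hden1
        _ = 2 * K / Real.sin (s * K) * t := by
            field_simp
    -- bound for the second term
    have hnum2 : |(d - s) * Real.sin (t * K) - t * Real.sin ((d - s) * K)|
        ≤ t * (t * K) ^ 3 / 2 := by
      have heq : (d - s) * Real.sin (t * K) - t * Real.sin ((d - s) * K)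
          = (d - s) * (Real.sin (t * K) - t * K)
            - t * (Real.sin ((d - s) * K) - (d - s) * K) := by ring
      have hs1 : |Real.sin (t * K) - t * K| ≤ (t * K) ^ 3 / 4 := by
        have := aux_sin (x := t * K) (by rwa [abs_of_nonneg ha0.le])
        rwa [abs_of_nonneg ha0.le] at this
      have hs2 : |Real.sin ((d - s) * K) - (d - s) * K| ≤ |(d - s) * K| ^ 3 / 4 :=
        aux_sin hb1
      have hb3 : |(d - s) * K| ^ 3 ≤ (t * K) ^ 3 :=
        pow_le_pow_left₀ (abs_nonneg _) hbabs 3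
      calc |(d - s) * Real.sin (t * K) - t * Real.sin ((d - s) * K)|
          = |(d - s) * (Real.sin (t * K) - t * K)
              - t * (Real.sin ((d - s) * K) - (d - s) * K)| := by rw [heq]
        _ ≤ |(d - s) * (Real.sin (t * K) - t * K)|
              + |t * (Real.sin ((d - s) * K) - (d - s) * K)| := abs_sub _ _
        _ ≤ t * ((t * K) ^ 3 / 4) + t * (|(d - s) * K| ^ 3 / 4) := by
            rw [abs_mul, abs_mul, abs_of_nonneg ht0.le]
            exact add_le_add (mul_le_mul he hs1 (abs_nonneg _) ht0.le)
              (mul_le_mul_of_nonneg_left hs2 ht0.le)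
        _ ≤ t * (t * K) ^ 3 / 2 := by nlinarith
    have hT2 : |((d - s) * Real.sin (t * K) - t * Real.sin ((d - s) * K))
          / (t * Real.sin (t * K))| ≤ K * t := by
      rw [abs_div, abs_of_pos (mul_pos ht0 hsa)]
      have hden2 : t * (t * K / 2) ≤ t * Real.sin (t * K) :=
        mul_le_mul_of_nonneg_left hsa_lb ht0.le
      calc _ ≤ (t * (t * K) ^ 3 / 2) / (t * (t * K / 2)) :=
            div_le_div₀ (by positivity) hnum2 (by positivity) hden2
        _ = (t * K) ^ 2 := by
            field_simp
        _ ≤ K * t := by nlinarith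
    calc |(Real.cos (d * K) - Real.cos (t * K) * Real.cos (s * K))
          / (Real.sin (t * K) * Real.sin (s * K)) - (s - d) / t|
        ≤ |Real.cos (s * K) * (Real.cos ((d - s) * K) - Real.cos (t * K))
            / (Real.sin (t * K) * Real.sin (s * K))|
          + |((d - s) * Real.sin (t * K) - t * Real.sin ((d - s) * K))
            / (t * Real.sin (t * K))| := by rw [key]; exact abs_add_le _ _
      _ ≤ 2 * K / Real.sin (s * K) * t + K * t := add_le_add hT1 hT2
      _ = C * t := by rw [hC]; ring
  · have : Filter.Tendsto (fun t : ℝ => C * t) (𝓝 0) (𝓝 0) := by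
      have h := (continuous_const.mul continuous_id).tendsto (0:ℝ) (f := fun t : ℝ => C * t)
      simpa using h
    exact this.mono_left nhdsWithin_le_nhds
end

section
/- Thin-triangle cosine lemma, hyperbolic case (Lemma 2.2, k < 0). Let X be a metric space, let γ : [0,T] → X and η : [0,S] → X be unit-speed geodesics with γ(0) = η(0), let κ > 0, and fix s ∈ (0, S]. Set d(t) := dist(γ(t), η(s)) and let cθ(t) := (cosh(t·√κ)·cosh(s·√κ) − cosh(d(t)·√κ)) / (sinh(t·√κ)·sinh(s·√κ)), which by the hyperbolic law of cosines is the cosine of the comparison angle at γ(0) in the hyperbolic plane of curvature −κ. Then lim_{t→0⁺} | cθ(t) − (s − d(t))/t | = 0. -/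
open Filter Topology Metric Set

lemma sinh_le_mul_cosh {x : ℝ} (hx : 0 ≤ x) : Real.sinh x ≤ x * Real.cosh x := by
  have hmono : MonotoneOn (fun z : ℝ => z * Real.cosh z - Real.sinh z) (Set.Ici 0) := by
    have hderiv : ∀ y : ℝ, HasDerivAt (fun z : ℝ => z * Real.cosh z - Real.sinh z)
        (y * Real.sinh y) y := by
      intro y
      have h1 := (hasDerivAt_id y).mul (Real.hasDerivAt_cosh y)
      have h2 := Real.hasDerivAt_sinh y
      have := h1.sub h2
      convert this using 1
      · rfl
      · rfl
      · funext z; simp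
      · simp
    apply monotoneOn_of_deriv_nonneg (convex_Ici 0)
    · exact (continuous_id.mul Real.continuous_cosh).sub Real.continuous_sinh |>.continuousOn
    · exact fun y _ => (hderiv y).differentiableAt.differentiableWithinAt
    · intro y hy
      rw [(hderiv y).deriv]
      rw [interior_Ici] at hy
      have h1 : 0 ≤ Real.sinh y := le_of_lt (Real.sinh_pos_iff.mpr hy)
      exact mul_nonneg (le_of_lt hy) h1
  have h0 : (0:ℝ) ∈ Set.Ici (0:ℝ) := Set.mem_Ici.mpr le_rfl
  have := hmono h0 (Set.mem_Ici.mpr hx) hx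
  simp only [Real.cosh_zero, Real.sinh_zero, mul_one, zero_mul, sub_zero] at this
  linarith

set_option maxHeartbeats 1000000 in
lemma thin_aux_bound {a s t d : ℝ} (ha : 0 < a) (hs : 0 < s) (ht : 0 < t)
    (hd : |d - s| ≤ t) :
    |(Real.cosh (t*a) * Real.cosh (s*a) - Real.cosh (d*a)) /
        (Real.sinh (t*a) * Real.sinh (s*a)) - (s - d)/t|
      ≤ Real.cosh (s*a)/Real.sinh (s*a) * (Real.sinh (t*a)/(Real.cosh (t*a)+1))
        + ((1 - 1/Real.cosh (t*a)) + t*a*(Real.sinh (t*a)/(Real.cosh (t*a)+1))) := by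
  set u : ℝ := d - s with hu
  set A : ℝ := Real.cosh (t*a) with hA
  set P : ℝ := Real.sinh (t*a) with hP
  set B : ℝ := Real.cosh (s*a) with hB
  set Q : ℝ := Real.sinh (s*a) with hQ
  have hta : 0 < t * a := mul_pos ht ha
  have hsa : 0 < s * a := mul_pos hs ha
  have hPpos : 0 < P := Real.sinh_pos_iff.mpr hta
  have hQpos : 0 < Q := Real.sinh_pos_iff.mpr hsa
  have hA1 : 1 ≤ A := Real.one_le_cosh _
  have hB1 : 1 ≤ B := Real.one_le_cosh _
  have htaP : t * a ≤ P := (Real.self_le_sinh_iff.mpr hta.le)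
  have hPta : P ≤ (t*a) * A := sinh_le_mul_cosh hta.le
  have hPsq : P ^ 2 = A ^ 2 - 1 := Real.sinh_sq _
  -- decomposition
  have hcd : Real.cosh (d*a) = B * Real.cosh (u*a) + Q * Real.sinh (u*a) := by
    have : d * a = s*a + u*a := by rw [hu]; ring
    rw [this, Real.cosh_add]
  have e1 : (A * B - Real.cosh (d*a)) / (P * Q) - (s - d)/t
      = B/Q * ((A - Real.cosh (u*a))/P) + (u/t - Real.sinh (u*a)/P) := by
    rw [hcd]
    have : s - d = -u := by rw [hu]; ring
    rw [this]
    field_simp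
    ring
  rw [e1]
  have hcu_le : Real.cosh (u*a) ≤ A := by
    rw [hA, Real.cosh_le_cosh, abs_mul, abs_mul, abs_of_pos ha, abs_of_pos ht]
    exact mul_le_mul_of_nonneg_right hd ha.le
  have hcu_ge : 1 ≤ Real.cosh (u*a) := Real.one_le_cosh _
  have hdivP : (A - 1)/P = P/(A+1) := by
    rw [div_eq_div_iff hPpos.ne' (by positivity : (A:ℝ) + 1 ≠ 0)]
    linear_combination (-1 : ℝ) * hPsq
  -- term 1 bound
  have hT1 : |B/Q * ((A - Real.cosh (u*a))/P)| ≤ B/Q * (P/(A+1)) := by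
    have hnn : 0 ≤ B/Q * ((A - Real.cosh (u*a))/P) := by
      apply mul_nonneg (by positivity)
      exact div_nonneg (by linarith) hPpos.le
    rw [abs_of_nonneg hnn, ← hdivP]
    have hstep : (A - Real.cosh (u*a))/P ≤ (A-1)/P := by
      gcongr
    exact mul_le_mul_of_nonneg_left hstep (by positivity)
  -- term 2 bound
  have key2 : ∀ v : ℝ, 0 ≤ v → v ≤ t →
      |v*P - t*Real.sinh (v*a)| ≤ t*(P - t*a) + t*(t*a*(A-1)) := by
    intro v hv0 hvt
    have hva : v*a ≤ Real.sinh (v*a) := Real.self_le_sinh_iff.mpr (by positivity)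
    have hsva : Real.sinh (v*a) ≤ (v*a) * Real.cosh (v*a) :=
      sinh_le_mul_cosh (by positivity)
    have hcva : Real.cosh (v*a) ≤ A := by
      rw [hA, Real.cosh_le_cosh, abs_of_nonneg (by positivity),
        abs_of_nonneg (by positivity)]
      exact mul_le_mul_of_nonneg_right hvt ha.le
    have c1 : t * Real.sinh (v*a) ≤ t * (v*a*Real.cosh (v*a)) :=
      mul_le_mul_of_nonneg_left hsva ht.le
    have c2 : t * (v*a*Real.cosh (v*a)) ≤ t*(v*a*A) := by
      apply mul_le_mul_of_nonneg_left _ ht.le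
      exact mul_le_mul_of_nonneg_left hcva (by positivity)
    have c3 : v*(t*a) ≤ v*P := mul_le_mul_of_nonneg_left htaP hv0
    have c4 : v*(t*a)*(A-1) ≤ t*(t*a)*(A-1) := by
      apply mul_le_mul_of_nonneg_right _ (by linarith : (0:ℝ) ≤ A-1)
      exact mul_le_mul_of_nonneg_right hvt hta.le
    have c5 : 0 ≤ t*(P - t*a) := mul_nonneg ht.le (by linarith)
    have c6 : v*(P - t*a) ≤ t*(P - t*a) :=
      mul_le_mul_of_nonneg_right hvt (by linarith)
    have c7 : t*(v*a) ≤ t*Real.sinh (v*a) := mul_le_mul_of_nonneg_left hva ht.le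
    have c8 : 0 ≤ t*(t*a*(A-1)) :=
      mul_nonneg ht.le (mul_nonneg hta.le (by linarith))
    have c9 : t*(t*a) ≤ t*P := mul_le_mul_of_nonneg_left htaP ht.le
    rw [abs_le]
    constructor
    · ring_nf at c1 c2 c3 c4 c5 c9 ⊢
      linarith
    · ring_nf at c6 c7 c8 ⊢
      linarith
  have hT2 : |u/t - Real.sinh (u*a)/P| ≤ (1 - 1/A) + t*a*(P/(A+1)) := by
    have habs : |u*P - t*Real.sinh (u*a)| ≤ t*(P - t*a) + t*(t*a*(A-1)) := by
      rcases le_total 0 u with hu0 | hu0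
      · exact key2 u hu0 ((abs_le.mp hd).2)
      · have h1 := key2 (-u) (by linarith) (by linarith [(abs_le.mp hd).1])
        rw [show (-u)*a = -(u*a) by ring, Real.sinh_neg] at h1
        have : (-u)*P - t*(-Real.sinh (u*a)) = -(u*P - t*Real.sinh (u*a)) := by ring
        rw [this, abs_neg] at h1
        exact h1
    have e2 : u/t - Real.sinh (u*a)/P = (u*P - t*Real.sinh (u*a))/(t*P) := by
      field_simp
    rw [e2, abs_div, abs_of_pos (mul_pos ht hPpos), div_le_iff₀ (mul_pos ht hPpos)]
    have h2 : t*P ≤ t*(t*a*A) := mul_le_mul_of_nonneg_left hPta ht.le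
    have hA0 : (0:ℝ) < A := by linarith
    have h1 : t*(P - t*a) ≤ (1 - 1/A) * (t*P) := by
      rw [sub_mul, one_mul]
      have h3 : 1/A*(t*P) ≤ t*(t*a) := by
        rw [div_mul_eq_mul_div, one_mul, div_le_iff₀ hA0]
        ring_nf at h2 ⊢
        linarith
      linarith
    have h4 : t*(t*a*(A-1)) = (t*a*(P/(A+1))) * (t*P) := by
      have h5 : A - 1 = P * (P/(A+1)) := by
        rw [← hdivP]
        field_simp
      rw [h5]; ring
    calc |u*P - t*Real.sinh (u*a)| ≤ t*(P - t*a) + t*(t*a*(A-1)) := habs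
      _ ≤ (1 - 1/A) * (t*P) + (t*a*(P/(A+1))) * (t*P) := by
          rw [h4]; linarith
      _ = ((1 - 1/A) + t*a*(P/(A+1))) * (t*P) := by ring
  calc |B/Q * ((A - Real.cosh (u*a))/P) + (u/t - Real.sinh (u*a)/P)|
      ≤ |B/Q * ((A - Real.cosh (u*a))/P)| + |u/t - Real.sinh (u*a)/P| := abs_add_le _ _
    _ ≤ B/Q * (P/(A+1)) + ((1 - 1/A) + t*a*(P/(A+1))) := add_le_add hT1 hT2

/-- Lemma 2.2, hyperbolic case (`k = -κ < 0`): the thin-triangle cosine lemma. -/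
theorem thinTriangle_cosine_hyperbolic {X : Type*} [MetricSpace X]
    {T S : ℝ} (hT : 0 < T)
    (γ η : ℝ → X)
    (hγ : IsUnitSpeedGeodesicOn γ T) (hη : IsUnitSpeedGeodesicOn η S)
    (hγη : γ 0 = η 0)
    {κ : ℝ} (hκ : 0 < κ)
    {s : ℝ} (hs : s ∈ Set.Ioc (0:ℝ) S) :
    Filter.Tendsto
      (fun t : ℝ =>
        |(Real.cosh (t * Real.sqrt κ) * Real.cosh (s * Real.sqrt κ)
            - Real.cosh (dist (γ t) (η s) * Real.sqrt κ))
            / (Real.sinh (t * Real.sqrt κ) * Real.sinh (s * Real.sqrt κ))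
          - (s - dist (γ t) (η s)) / t|)
      (𝓝[>] (0:ℝ)) (𝓝 0) := by
  obtain ⟨hs0, hsS⟩ := hs
  set a : ℝ := Real.sqrt κ with haa
  have ha : 0 < a := Real.sqrt_pos.mpr hκ
  set g : ℝ → ℝ := fun t =>
    Real.cosh (s*a)/Real.sinh (s*a) * (Real.sinh (t*a)/(Real.cosh (t*a)+1))
      + ((1 - 1/Real.cosh (t*a)) + t*a*(Real.sinh (t*a)/(Real.cosh (t*a)+1))) with hg
  have hgcont : Continuous g := by
    have h1 : Continuous fun t : ℝ => Real.sinh (t*a) :=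
      Real.continuous_sinh.comp (continuous_id.mul continuous_const)
    have h2 : Continuous fun t : ℝ => Real.cosh (t*a) :=
      Real.continuous_cosh.comp (continuous_id.mul continuous_const)
    apply Continuous.add
    · exact continuous_const.mul (h1.div (h2.add continuous_const)
        (fun t => by positivity))
    · apply Continuous.add
      · exact continuous_const.sub (continuous_const.div h2 (fun t => (Real.cosh_pos _).ne'))
      · exact (continuous_id.mul continuous_const).mul
          (h1.div (h2.add continuous_const) (fun t => by positivity))
  have hg0 : g 0 = 0 := by
    simp [hg]
  have hgto : Filter.Tendsto g (𝓝[>] (0:ℝ)) (𝓝 0) := by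
    have := hgcont.tendsto 0
    rw [hg0] at this
    exact this.mono_left nhdsWithin_le_nhds
  apply squeeze_zero' (Filter.Eventually.of_forall fun t => abs_nonneg _)
  · filter_upwards [Ioc_mem_nhdsGT hT] with t ht
    obtain ⟨ht0, htT⟩ := ht
    set d : ℝ := dist (γ t) (η s) with hdd
    have h0S : (0:ℝ) ∈ Set.Icc (0:ℝ) S := ⟨le_refl 0, hs0.le.trans hsS⟩
    have hsIcc : s ∈ Set.Icc (0:ℝ) S := ⟨hs0.le, hsS⟩
    have hds : dist (η 0) (η s) = s := by
      rw [hη 0 h0S s hsIcc, abs_of_nonpos (by linarith), neg_sub, sub_zero]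
    have hdt : dist (γ t) (γ 0) = t := by
      rw [hγ t ⟨ht0.le, htT⟩ 0 ⟨le_refl 0, hT.le⟩, sub_zero, abs_of_pos ht0]
    have hub : d ≤ t + s := by
      calc d ≤ dist (γ t) (γ 0) + dist (γ 0) (η s) := dist_triangle _ _ _
        _ = t + s := by rw [hdt, hγη, hds]
    have hγt : dist (γ t) (η 0) = t := by rw [← hγη]; exact hdt
    have hlb : s - t ≤ d := by
      have h9 : dist (η 0) (η s) ≤ dist (η 0) (γ t) + d := dist_triangle _ _ _
      rw [hds, dist_comm, hγt] at h9
      linarith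
    have hdabs : |d - s| ≤ t := abs_le.mpr ⟨by linarith, by linarith⟩
    exact thin_aux_bound ha hs0 ht0 hdabs
  · exact hgto
end

section
/- Strong upper angle lemma (Lemma 2.3). Let X be a metric space and let γ : [0,T] → X and η : [0,S] → X be unit-speed geodesics with γ(0) = η(0). Then for every fixed s ∈ (0, S], limsup_{t→0⁺} ∠⁰_{γ(0)}(γ(t), η(s)) ≤ ∠⁺(γ, η). -/
open Filter Topology Metric Set

private lemma aux_alg_ineq {t s s' c c' ca : ℝ} (ht0 : 0 < t) (hts' : t < s')
    (hs's : s' < s) (hc'low : s' - t ≤ c') (hcnn : 0 ≤ c)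
    (hc1 : c ≤ c' + (s - s'))
    (hcos : ca ≤ (t ^ 2 + s' ^ 2 - c' ^ 2) / (2 * t * s')) :
    t / (2 * s) + (2 * s' * ca - t) * ((s + c) / ((s' + c') * (2 * s)))
      ≤ (t ^ 2 + s ^ 2 - c ^ 2) / (2 * t * s) := by
  have hs'0 : 0 < s' := ht0.trans hts'
  have hs0 : 0 < s := hs'0.trans hs's
  have hc'0 : 0 < c' := by linarith
  have h4 : 2 * t * s' * ca ≤ t ^ 2 + s' ^ 2 - c' ^ 2 := by
    have := (le_div_iff₀ (by positivity : (0:ℝ) < 2 * t * s')).mp hcos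
    linarith
  have k1 : t * (2 * s' * ca - t) ≤ (s' - c') * (s' + c') := by nlinarith [h4]
  have k2 : (s' - c') * (s + c) ≤ (s - c) * (s + c) :=
    mul_le_mul_of_nonneg_right (by linarith) (by positivity)
  have k3 : t * (2 * s' * ca - t) * (s + c) ≤ (s' - c') * (s' + c') * (s + c) :=
    mul_le_mul_of_nonneg_right k1 (by positivity)
  have k4 : (s' - c') * (s + c) * (s' + c') ≤ (s - c) * (s + c) * (s' + c') :=
    mul_le_mul_of_nonneg_right k2 (by positivity)
  have kstar : t ^ 2 * (s' + c') + t * (2 * s' * ca - t) * (s + c) ≤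
      (t ^ 2 + s ^ 2 - c ^ 2) * (s' + c') := by nlinarith [k3, k4]
  have hrw : t / (2 * s) + (2 * s' * ca - t) * ((s + c) / ((s' + c') * (2 * s)))
      = (t ^ 2 * (s' + c') + t * (2 * s' * ca - t) * (s + c)) / (2 * t * s * (s' + c')) := by
    field_simp
  rw [hrw, div_le_div_iff₀ (by positivity) (by positivity)]
  nlinarith [mul_le_mul_of_nonneg_right kstar (by positivity : (0:ℝ) ≤ 2 * t * s)]

private lemma aux_q_mem {t s' c' : ℝ} (ht0 : 0 < t) (hts' : t ≤ s')
    (h1 : s' - t ≤ c') (h2 : c' ≤ s' + t) :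
    (t ^ 2 + s' ^ 2 - c' ^ 2) / (2 * t * s') ∈ Set.Icc (-1 : ℝ) 1 := by
  have hs'0 : 0 < s' := ht0.trans_le hts'
  constructor
  · rw [le_div_iff₀ (by positivity)]
    nlinarith
  · rw [div_le_one (by positivity)]
    nlinarith

/-- Lemma 2.3: strong upper angle lemma. -/
theorem limsup_compAngle_le_upperAngle {X : Type*} [MetricSpace X]
    {T S : ℝ} (hT : 0 < T)
    (γ η : ℝ → X)
    (hγ : IsUnitSpeedGeodesicOn γ T) (hη : IsUnitSpeedGeodesicOn η S)
    (hγη : γ 0 = η 0)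
    {s : ℝ} (hs : s ∈ Set.Ioc (0:ℝ) S) :
    Filter.limsup (fun t : ℝ => compAngle (γ 0) (γ t) (η s)) (𝓝[>] (0:ℝ))
      ≤ upperAngle γ η := by
  obtain ⟨hs0, hsS⟩ := hs
  have hS0 : 0 < S := hs0.trans_le hsS
  have hpη : ∀ r ∈ Set.Icc (0:ℝ) S, dist (γ 0) (η r) = r := by
    intro r hr
    rw [hγη, hη 0 ⟨le_rfl, hS0.le⟩ r hr, abs_of_nonpos (by linarith [hr.1])]
    ring
  have hpγ : ∀ t ∈ Set.Icc (0:ℝ) T, dist (γ 0) (γ t) = t := by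
    intro t ht
    rw [hγ 0 ⟨le_rfl, hT.le⟩ t ht, abs_of_nonpos (by linarith [ht.1])]
    ring
  have hdη : ∀ r ∈ Set.Icc (0:ℝ) S, ∀ t ∈ Set.Icc (0:ℝ) T,
      |dist (γ t) (η r) - r| ≤ t := by
    intro r hr t ht
    have h1 := abs_dist_sub_le (γ t) (γ 0) (η r)
    rw [hpη r hr, dist_comm (γ t) (γ 0), hpγ t ht] at h1
    exact h1
  have hangle : ∀ r ∈ Set.Icc (0:ℝ) S, ∀ t ∈ Set.Icc (0:ℝ) T,
      compAngle (γ 0) (γ t) (η r) =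
        Real.arccos ((t^2 + r^2 - dist (γ t) (η r)^2) / (2 * t * r)) := by
    intro r hr t ht
    unfold compAngle
    rw [hpγ t ht, hpη r hr]
  have hbddπ : ∀ x y : X, compAngle (γ 0) x y ≤ Real.pi := fun _ _ => Real.arccos_le_pi _
  have hbdd0 : ∀ x y : X, 0 ≤ compAngle (γ 0) x y := fun _ _ => Real.arccos_nonneg _
  haveI : ((𝓝[>] (0:ℝ)) ×ˢ (𝓝[>] (0:ℝ))).NeBot := Filter.prod_neBot.mpr ⟨inferInstance, inferInstance⟩
  have hL0 : (0:ℝ) ≤ upperAngle γ η := by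
    apply Filter.le_limsup_of_frequently_le
    · exact Filter.Frequently.of_forall fun x => hbdd0 _ _
    · exact Filter.isBoundedUnder_of ⟨Real.pi, fun x => hbddπ _ _⟩
  refine le_of_forall_pos_le_add fun ε hε => ?_
  set a := min (upperAngle γ η + ε) Real.pi with ha
  have ha0 : 0 ≤ a := le_min (by linarith) Real.pi_nonneg
  have haπ : a ≤ Real.pi := min_le_right _ _
  have hev : ∀ᶠ ts in (𝓝[>] (0:ℝ)) ×ˢ (𝓝[>] (0:ℝ)),
      compAngle (γ 0) (γ ts.1) (η ts.2) ≤ a := by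
    have hcob : Filter.IsBoundedUnder (· ≤ ·) ((𝓝[>] (0:ℝ)) ×ˢ (𝓝[>] (0:ℝ)))
        (fun ts : ℝ × ℝ => compAngle (γ 0) (γ ts.1) (η ts.2)) :=
      Filter.isBoundedUnder_of ⟨Real.pi, fun x => hbddπ _ _⟩
    have hlt : Filter.limsup (fun ts : ℝ × ℝ => compAngle (γ 0) (γ ts.1) (η ts.2))
        ((𝓝[>] (0:ℝ)) ×ˢ (𝓝[>] (0:ℝ))) < upperAngle γ η + ε := by
      unfold upperAngle
      exact lt_add_of_pos_right _ hε
    have h1 : ∀ᶠ ts in (𝓝[>] (0:ℝ)) ×ˢ (𝓝[>] (0:ℝ)),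
        compAngle (γ 0) (γ ts.1) (η ts.2) < upperAngle γ η + ε :=
      Filter.eventually_lt_of_limsup_lt hlt hcob
    filter_upwards [h1] with ts h
    exact le_min h.le (hbddπ _ _)
  rw [Filter.eventually_prod_iff] at hev
  obtain ⟨pa, hpa, pb, hpb, himp⟩ := hev
  obtain ⟨s', hpbs', hs'0, hs's⟩ :=
    (hpb.and (Filter.eventually_of_mem (Ioo_mem_nhdsGT_of_mem ⟨le_rfl, hs0⟩ :
      Set.Ioo (0:ℝ) s ∈ 𝓝[>] (0:ℝ)) (fun x hx => hx))).exists
  -- here: s' fixed with 0 < s' < s, pb s'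
  have hs'S : s' ≤ S := (hs's.le).trans hsS
  have hs'Icc : s' ∈ Set.Icc (0:ℝ) S := ⟨hs'0.le, hs'S⟩
  have hsIcc : s ∈ Set.Icc (0:ℝ) S := ⟨hs0.le, hsS⟩
  set g : ℝ → ℝ := fun t => t/(2*s) + (2*s'*Real.cos a - t) *
    ((s + dist (γ t) (η s)) / ((s' + dist (γ t) (η s')) * (2*s))) with hg
  have hid : Filter.Tendsto (fun t:ℝ => t) (𝓝[>] (0:ℝ)) (𝓝 0) :=
    tendsto_id.mono_left nhdsWithin_le_nhds
  have hten : ∀ r ∈ Set.Icc (0:ℝ) S, Filter.Tendsto (fun t => dist (γ t) (η r))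
      (𝓝[>] (0:ℝ)) (𝓝 r) := by
    intro r hr
    apply tendsto_of_tendsto_of_tendsto_of_le_of_le' (g := fun t:ℝ => r - t)
      (h := fun t:ℝ => r + t)
    · simpa using tendsto_const_nhds.sub hid
    · simpa using tendsto_const_nhds.add hid
    · filter_upwards [Ioo_mem_nhdsGT_of_mem (⟨le_rfl, hT⟩ : (0:ℝ) ∈ Set.Ico 0 T)] with t ht
      have := abs_le.mp (hdη r hr t ⟨ht.1.le, ht.2.le⟩)
      linarith [this.1]
    · filter_upwards [Ioo_mem_nhdsGT_of_mem (⟨le_rfl, hT⟩ : (0:ℝ) ∈ Set.Ico 0 T)] with t ht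
      have := abs_le.mp (hdη r hr t ⟨ht.1.le, ht.2.le⟩)
      linarith [this.2]
  have hgt : Filter.Tendsto g (𝓝[>] (0:ℝ)) (𝓝 (Real.cos a)) := by
    have h1 : Filter.Tendsto (fun t:ℝ => t/(2*s)) (𝓝[>] (0:ℝ)) (𝓝 (0/(2*s))) :=
      hid.div_const _
    have h2 : Filter.Tendsto (fun t:ℝ => 2*s'*Real.cos a - t) (𝓝[>] (0:ℝ))
        (𝓝 (2*s'*Real.cos a - 0)) := tendsto_const_nhds.sub hid
    have h3 : Filter.Tendsto (fun t => (s + dist (γ t) (η s)) /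
        ((s' + dist (γ t) (η s')) * (2*s))) (𝓝[>] (0:ℝ)) (𝓝 ((s+s)/((s'+s')*(2*s)))) :=
      Filter.Tendsto.div (tendsto_const_nhds.add (hten s hsIcc))
        ((tendsto_const_nhds.add (hten s' hs'Icc)).mul tendsto_const_nhds)
        (by positivity)
    have h4 := h1.add (h2.mul h3)
    have hval : 0/(2*s) + (2*s'*Real.cos a - 0) * ((s+s)/((s'+s')*(2*s))) = Real.cos a := by
      field_simp
      ring
    rw [hval] at h4
    exact h4
  have hmain : ∀ᶠ t in 𝓝[>] (0:ℝ),
      compAngle (γ 0) (γ t) (η s) ≤ Real.arccos (g t) := by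
    filter_upwards [Ioo_mem_nhdsGT_of_mem (⟨le_rfl, lt_min hT hs'0⟩ :
      (0:ℝ) ∈ Set.Ico 0 (min T s')), hpa] with t ht hpat
    obtain ⟨ht0, htm⟩ := ht
    have htT : t < T := htm.trans_le (min_le_left _ _)
    have hts' : t < s' := htm.trans_le (min_le_right _ _)
    have htIcc : t ∈ Set.Icc (0:ℝ) T := ⟨ht0.le, htT.le⟩
    have hcs := abs_le.mp (hdη s hsIcc t htIcc)
    have hcs' := abs_le.mp (hdη s' hs'Icc t htIcc)
    have hc1 : dist (γ t) (η s) ≤ dist (γ t) (η s') + (s - s') := by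
      have h := dist_triangle (γ t) (η s') (η s)
      rw [hη s' hs'Icc s hsIcc, abs_of_nonpos (by linarith)] at h
      linarith
    have hq'mem := aux_q_mem ht0 hts'.le
      (by linarith [hcs'.1] : s' - t ≤ dist (γ t) (η s'))
      (by linarith [hcs'.2] : dist (γ t) (η s') ≤ s' + t)
    have hθ' : compAngle (γ 0) (γ t) (η s') ≤ a := himp hpat hpbs'
    rw [hangle s' hs'Icc t htIcc] at hθ'
    have hcos : Real.cos a ≤ (t ^ 2 + s' ^ 2 - dist (γ t) (η s') ^ 2) / (2 * t * s') := by
      have h := Real.cos_le_cos_of_nonneg_of_le_pi (Real.arccos_nonneg _) haπ hθ'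
      rwa [Real.cos_arccos hq'mem.1 hq'mem.2] at h
    rw [hangle s hsIcc t htIcc]
    have hanti : ∀ x y : ℝ, x ≤ y → Real.arccos y ≤ Real.arccos x := by
      intro x y hxy
      unfold Real.arccos
      linarith [Real.monotone_arcsin hxy]
    apply hanti
    exact aux_alg_ineq ht0 hts' hs's (by linarith [hcs'.1]) dist_nonneg hc1 hcos
  -- conclude
  have htend : Filter.Tendsto (fun t => Real.arccos (g t)) (𝓝[>] (0:ℝ)) (𝓝 a) := by
    have := (Real.continuous_arccos.continuousAt.tendsto).comp hgt
    rwa [Real.arccos_cos ha0 haπ] at this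
  calc Filter.limsup (fun t : ℝ => compAngle (γ 0) (γ t) (η s)) (𝓝[>] (0:ℝ))
      ≤ Filter.limsup (fun t => Real.arccos (g t)) (𝓝[>] (0:ℝ)) := by
        exact Filter.limsup_le_limsup hmain
          ((Filter.isBoundedUnder_of ⟨0, fun x => hbdd0 _ _⟩ :
            Filter.IsBoundedUnder (· ≥ ·) _ _).isCoboundedUnder_le)
          htend.isBoundedUnder_le
    _ = a := htend.limsup_eq
    _ ≤ upperAngle γ η + ε := min_le_left _ _
end

section
/- Existence of angles under an upper curvature bound (Lemma 3.1, curvature ≤ 0 case). Let X be a metric space, let U ⊆ X be a region of curvature ≤ 0, and let γ : [0,T] → X and η : [0,S] → X be unit-speed geodesics with γ(0) = η(0) whose images are contained in U. Then the angle between γ and η exists, i.e. ∠⁺(γ, η) = ∠⁻(γ, η), and its value equals lim_{t→0⁺} ∠⁰_{γ(0)}(γ(t), η(t)). -/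
open Filter Topology Metric Set

noncomputable section
namespace AngleAux

def pt (a b : ℝ) : EuclideanSpace ℝ (Fin 2) := (WithLp.equiv 2 (Fin 2 → ℝ)).symm ![a, b]

lemma dist_pt (a b c d : ℝ) : dist (pt a b) (pt c d) = Real.sqrt ((a-c)^2 + (b-d)^2) := by
  rw [EuclideanSpace.dist_eq]
  simp [pt, Fin.sum_univ_two, Real.dist_eq, sq_abs]

lemma lineMap_pt (a b c d r : ℝ) :
    AffineMap.lineMap (pt a b) (pt c d) r = pt (a + r*(c-a)) (b + r*(d-b)) := by
  rw [AffineMap.lineMap_apply]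
  ext i; fin_cases i <;> simp [pt] <;> ring

lemma arccos_antitone : Antitone Real.arccos := fun x y h => by
  simp only [Real.arccos_eq_pi_div_two_sub_arcsin]
  exact sub_le_sub_left (Real.monotone_arcsin h) _

lemma exists_comp_triangle {t s d : ℝ} (ht : 0 < t) (hs : 0 < s)
    (h1 : |t - s| ≤ d) (h2 : d ≤ t + s) :
    ∃ xb yb zb : EuclideanSpace ℝ (Fin 2),
      dist xb yb = t ∧ dist xb zb = s ∧ dist yb zb = d ∧
      ∀ a : ℝ, dist (AffineMap.lineMap xb yb (a / t)) zb ^ 2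
          = a^2 + s^2 - 2*a*s*((t^2+s^2-d^2)/(2*t*s)) := by
  have hd0 : 0 ≤ d := le_trans (abs_nonneg _) h1
  set C : ℝ := (t^2+s^2-d^2)/(2*t*s) with hCdef
  have hts : (0:ℝ) < 2*t*s := by positivity
  have h1' : (t-s)^2 ≤ d^2 := by
    have := sq_abs (t - s) ▸ pow_le_pow_left₀ (abs_nonneg _) h1 2
    simpa [sq_abs] using this
  have h2' : d^2 ≤ (t+s)^2 := pow_le_pow_left₀ hd0 h2 2
  have hC1 : C ≤ 1 := by
    rw [hCdef, div_le_one hts]; nlinarith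
  have hC2 : -1 ≤ C := by
    rw [hCdef, le_div_iff₀ hts]; nlinarith
  set θ := Real.arccos C with hθ
  have hcos : Real.cos θ = C := Real.cos_arccos hC2 hC1
  have hsin : Real.sin θ ^ 2 = 1 - C^2 := by
    have := Real.sin_sq_add_cos_sq θ
    rw [hcos] at this; linarith
  have h2tsC : 2*t*s*C = t^2+s^2-d^2 := by
    rw [hCdef, mul_div_cancel₀ _ hts.ne']
  refine ⟨pt 0 0, pt t 0, pt (s*C) (s*Real.sin θ), ?_, ?_, ?_, ?_⟩
  · rw [dist_pt]
    rw [show ((0:ℝ)-t)^2 + ((0:ℝ)-0)^2 = t^2 by ring, Real.sqrt_sq ht.le]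
  · rw [dist_pt]
    have : ((0:ℝ)-s*C)^2 + ((0:ℝ)-s*Real.sin θ)^2 = s^2 := by nlinarith [hsin]
    rw [this, Real.sqrt_sq hs.le]
  · rw [dist_pt]
    have : (t-s*C)^2 + ((0:ℝ)-s*Real.sin θ)^2 = d^2 := by nlinarith [hsin]
    rw [this, Real.sqrt_sq hd0]
  · intro a
    rw [lineMap_pt]
    have hat : (0:ℝ) + a / t * (t - 0) = a := by field_simp; ring
    rw [hat, show (0:ℝ) + a/t*(0-0) = 0 by ring, dist_pt]
    rw [Real.sq_sqrt (by positivity)]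
    nlinarith [hsin]


lemma compAngle_symm {X : Type*} [MetricSpace X] (p x y : X) :
    compAngle p x y = compAngle p y x := by
  rw [compAngle, compAngle, dist_comm x y]
  ring_nf

lemma compAngle_mono {X : Type*} [MetricSpace X] {U : Set X} (hU : IsCurvLeRegion U)
    {T S : ℝ} {γ η : ℝ → X}
    (hγ : IsUnitSpeedGeodesicOn γ T) (hη : IsUnitSpeedGeodesicOn η S)
    (hγη : γ 0 = η 0)
    (hγU : ∀ u ∈ Set.Icc (0:ℝ) T, γ u ∈ U) (hηU : ∀ u ∈ Set.Icc (0:ℝ) S, η u ∈ U)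
    {t t' s : ℝ} (ht' : 0 < t') (h't : t' ≤ t) (htT : t ≤ T) (hs : 0 < s) (hsS : s ≤ S) :
    compAngle (γ 0) (γ t') (η s) ≤ compAngle (γ 0) (γ t) (η s) := by
  have ht : 0 < t := lt_of_lt_of_le ht' h't
  have h0T : (0:ℝ) ≤ T := le_trans ht.le htT
  have h0S : (0:ℝ) ≤ S := le_trans hs.le hsS
  have habs : ∀ u : ℝ, 0 ≤ u → |0 - u| = u := by
    intro u hu; rw [zero_sub, abs_neg, abs_of_nonneg hu]
  have dxy : dist (γ 0) (γ t) = t := by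
    rw [hγ 0 ⟨le_refl _, h0T⟩ t ⟨ht.le, htT⟩, habs t ht.le]
  have dxy' : dist (γ 0) (γ t') = t' := by
    rw [hγ 0 ⟨le_refl _, h0T⟩ t' ⟨ht'.le, le_trans h't htT⟩, habs t' ht'.le]
  have dxz : dist (γ 0) (η s) = s := by
    rw [hγη, hη 0 ⟨le_refl _, h0S⟩ s ⟨hs.le, hsS⟩, habs s hs.le]
  set d := dist (γ t) (η s) with hd
  have hd1 : |t - s| ≤ d := by
    rw [abs_sub_le_iff]
    constructor
    · have := dist_triangle (γ 0) (η s) (γ t)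
      rw [dxz, dist_comm (η s) (γ t)] at this
      rw [← dxy]; linarith
    · have := dist_triangle (γ 0) (γ t) (η s)
      rw [dxy] at this
      rw [← dxz]; linarith
  have hd2 : d ≤ t + s := by
    have := dist_triangle (γ t) (γ 0) (η s)
    rw [dist_comm (γ t) (γ 0), dxy, dxz] at this
    exact this
  have hxU : γ 0 ∈ U := hγU 0 ⟨le_refl _, h0T⟩
  have hyU : γ t ∈ U := hγU t ⟨ht.le, htT⟩
  have hzU : η s ∈ U := hηU s ⟨hs.le, hsS⟩
  obtain ⟨σ, hσ, hσ0, hσd, hσU⟩ := hU.1 (γ t) hyU (η s) hzU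
  obtain ⟨xb, yb, zb, hxy, hxz, hyz, hform⟩ := exists_comp_triangle ht hs hd1 hd2
  have key := hU.2 (γ 0) hxU (γ t) hyU (η s) hzU ![γ, η, σ] ?_ xb yb zb
      (hxy.trans dxy.symm) (hxz.trans dxz.symm) hyz 0 1 t' s ?_ ?_
  rotate_left
  · intro i
    fin_cases i
    · refine ⟨?_, rfl, ?_, ?_⟩
      · intro u hu v hv
        rw [dxy] at hu hv
        exact hγ u ⟨hu.1, le_trans hu.2 htT⟩ v ⟨hv.1, le_trans hv.2 htT⟩
      · show γ (dist (γ 0) (γ t)) = γ t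
        rw [dxy]
      · intro u hu
        rw [dxy] at hu
        exact hγU u ⟨hu.1, le_trans hu.2 htT⟩
    · refine ⟨?_, ?_, ?_, ?_⟩
      pick_goal 2
      · show η 0 = γ 0
        exact hγη.symm
      · intro u hu v hv
        rw [dxz] at hu hv
        exact hη u ⟨hu.1, le_trans hu.2 hsS⟩ v ⟨hv.1, le_trans hv.2 hsS⟩
      · show η (dist (γ 0) (η s)) = η s
        rw [dxz]
      · intro u hu
        rw [dxz] at hu
        exact hηU u ⟨hu.1, le_trans hu.2 hsS⟩
    · exact ⟨hσ, hσ0, hσd, hσU⟩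
  · show t' ∈ Set.Icc (0:ℝ) (dist (γ 0) (γ t))
    rw [dxy]; exact ⟨ht'.le, h't⟩
  · show s ∈ Set.Icc (0:ℝ) (dist (γ 0) (η s))
    rw [dxz]; exact ⟨hs.le, le_refl _⟩
  simp only [Matrix.cons_val_zero, Matrix.cons_val_one, Matrix.head_cons] at key
  rw [dxy, dxz, div_self hs.ne', AffineMap.lineMap_apply_one] at key
  set C : ℝ := (t^2+s^2-d^2)/(2*t*s) with hCdef
  have hDsq : dist (γ t') (η s) ^ 2 ≤ t'^2 + s^2 - 2*t'*s*C := by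
    calc dist (γ t') (η s) ^ 2 ≤ dist ((AffineMap.lineMap xb yb) (t'/t)) zb ^ 2 :=
          pow_le_pow_left₀ dist_nonneg key 2
      _ = t'^2 + s^2 - 2*t'*s*C := hform t'
  rw [compAngle, compAngle, dxy, dxy', dxz, ← hd]
  apply arccos_antitone
  rw [div_le_div_iff₀ (by positivity) (by positivity)]
  have h2tsC : C * (2*t*s) = t^2+s^2-d^2 := div_mul_cancel₀ _ (by positivity)
  calc (t^2+s^2-d^2) * (2*t'*s) = (2*t'*s*C)*(2*t*s) := by rw [← h2tsC]; ring
    _ ≤ (t'^2+s^2-dist (γ t') (η s)^2)*(2*t*s) :=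
        mul_le_mul_of_nonneg_right (by linarith) (by positivity)

end AngleAux
end

/-- Lemma 3.1, curvature `≤ 0` case: the angle between two geodesics exists
and equals the limit of the diagonal comparison angles. -/
theorem angle_exists_of_curvLe {X : Type*} [MetricSpace X]
    {U : Set X} (hU : IsCurvLeRegion U)
    {T S : ℝ} (hT : 0 < T) (hS : 0 < S)
    (γ η : ℝ → X)
    (hγ : IsUnitSpeedGeodesicOn γ T) (hη : IsUnitSpeedGeodesicOn η S)
    (hγη : γ 0 = η 0)
    (hγU : ∀ t ∈ Set.Icc (0:ℝ) T, γ t ∈ U)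
    (hηU : ∀ s ∈ Set.Icc (0:ℝ) S, η s ∈ U) :
    upperAngle γ η = lowerAngle γ η ∧
    Filter.Tendsto (fun t : ℝ => compAngle (γ 0) (γ t) (η t)) (𝓝[>] (0:ℝ))
      (𝓝 (upperAngle γ η)) := by
  have mono1 : ∀ {t t' s : ℝ}, 0 < t' → t' ≤ t → t ≤ T → 0 < s → s ≤ S →
      compAngle (γ 0) (γ t') (η s) ≤ compAngle (γ 0) (γ t) (η s) :=
    fun h1 h2 h3 h4 h5 => AngleAux.compAngle_mono hU hγ hη hγη hγU hηU h1 h2 h3 h4 h5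
  have mono2 : ∀ {s s' t : ℝ}, 0 < s' → s' ≤ s → s ≤ S → 0 < t → t ≤ T →
      compAngle (γ 0) (γ t) (η s') ≤ compAngle (γ 0) (γ t) (η s) := by
    intro a b c h1 h2 h3 h4 h5
    have := AngleAux.compAngle_mono hU hη hγ hγη.symm hηU hγU h1 h2 h3 h4 h5
    rw [← hγη] at this
    rw [AngleAux.compAngle_symm (γ 0) (γ c) (η b),
      AngleAux.compAngle_symm (γ 0) (γ c) (η a)]
    exact this
  set m := min T S with hm
  have hm0 : 0 < m := lt_min hT hS
  set Sset : Set ℝ := (fun r => compAngle (γ 0) (γ r) (η r)) '' Set.Ioc 0 m with hSset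
  have hSne : Sset.Nonempty := ⟨compAngle (γ 0) (γ m) (η m), ⟨m, ⟨hm0, le_refl _⟩, rfl⟩⟩
  have hSbd : BddBelow Sset := ⟨0, by
    rintro x ⟨r, _, rfl⟩
    exact Real.arccos_nonneg _⟩
  set L := sInf Sset with hL
  have hfL : ∀ t s : ℝ, 0 < t → t ≤ T → 0 < s → s ≤ S →
      L ≤ compAngle (γ 0) (γ t) (η s) := by
    intro t s h1 h2 h3 h4
    set r := min t s with hr
    have hr0 : 0 < r := lt_min h1 h3
    have hrm : r ≤ m := min_le_min h2 h4
    have step1 : compAngle (γ 0) (γ r) (η r) ≤ compAngle (γ 0) (γ t) (η r) :=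
      mono1 hr0 (min_le_left _ _) h2 hr0 (le_trans (min_le_right _ _) h4)
    have step2 : compAngle (γ 0) (γ t) (η r) ≤ compAngle (γ 0) (γ t) (η s) :=
      mono2 hr0 (min_le_right _ _) h4 h1 h2
    have : L ≤ compAngle (γ 0) (γ r) (η r) := csInf_le hSbd ⟨r, ⟨hr0, hrm⟩, rfl⟩
    linarith
  have htends : Tendsto (fun ts : ℝ × ℝ => compAngle (γ 0) (γ ts.1) (η ts.2))
      ((𝓝[>] (0:ℝ)) ×ˢ (𝓝[>] (0:ℝ))) (𝓝 L) := by
    rw [Metric.tendsto_nhds]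
    intro ε hε
    obtain ⟨x, ⟨r, ⟨hr0, hrm⟩, rfl⟩, hx⟩ :=
      exists_lt_of_csInf_lt hSne (lt_add_of_pos_right L hε)
    have hmem : Set.Ioc (0:ℝ) r ×ˢ Set.Ioc (0:ℝ) r ∈ (𝓝[>] (0:ℝ)) ×ˢ (𝓝[>] (0:ℝ)) :=
      Filter.prod_mem_prod (Ioc_mem_nhdsGT_of_mem ⟨le_refl _, hr0⟩)
        (Ioc_mem_nhdsGT_of_mem ⟨le_refl _, hr0⟩)
    filter_upwards [hmem] with ts hts
    obtain ⟨⟨ht1, ht2⟩, ⟨hs1, hs2⟩⟩ := hts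
    have hrT : r ≤ T := le_trans hrm (min_le_left _ _)
    have hrS : r ≤ S := le_trans hrm (min_le_right _ _)
    have hub1 : compAngle (γ 0) (γ ts.1) (η ts.2) ≤ compAngle (γ 0) (γ r) (η ts.2) :=
      mono1 ht1 ht2 hrT hs1 (le_trans hs2 hrS)
    have hub2 : compAngle (γ 0) (γ r) (η ts.2) ≤ compAngle (γ 0) (γ r) (η r) :=
      mono2 hs1 hs2 hrS hr0 hrT
    have hub : compAngle (γ 0) (γ ts.1) (η ts.2) ≤ compAngle (γ 0) (γ r) (η r) :=
      le_trans hub1 hub2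
    have hlb : L ≤ compAngle (γ 0) (γ ts.1) (η ts.2) :=
      hfL ts.1 ts.2 ht1 (le_trans ht2 hrT) hs1 (le_trans hs2 hrS)
    simp only at hx
    rw [Real.dist_eq, abs_of_nonneg (by linarith)]
    linarith
  have h1 : upperAngle γ η = L := htends.limsup_eq
  have h2 : lowerAngle γ η = L := htends.liminf_eq
  refine ⟨h1.trans h2.symm, ?_⟩
  rw [h1]
  have hdiag : Tendsto (fun t : ℝ => ((t, t) : ℝ × ℝ)) (𝓝[>] (0:ℝ))
      ((𝓝[>] (0:ℝ)) ×ˢ (𝓝[>] (0:ℝ))) := Filter.Tendsto.prodMk tendsto_id tendsto_id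
  exact (htends.comp hdiag).congr (fun t => rfl)
end

section
/- Angle–comparison-angle inequality, upper curvature bound (Corollary 3.2, curvature ≤ 0 case). Let X be a metric space, let U ⊆ X be a region of curvature ≤ 0, and let γ : [0,T] → X and η : [0,S] → X be unit-speed geodesics with γ(0) = η(0) whose images are contained in U. Then for all t ∈ (0, T] and s ∈ (0, S], ∠⁺(γ, η) ≤ ∠⁰_{γ(0)}(γ(t), η(s)). (By Lemma 3.1 the angle ∠(γ, η) exists and equals ∠⁺(γ, η).) -/
open Filter Topology Metric Set

noncomputable def pt (a b : ℝ) : EuclideanSpace ℝ (Fin 2) := WithLp.toLp 2 ![a, b]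

lemma dist_pt (a b c d : ℝ) : dist (pt a b) (pt c d) = Real.sqrt ((a-c)^2 + (b-d)^2) := by
  rw [EuclideanSpace.dist_eq, Fin.sum_univ_two]
  simp [pt, Real.dist_eq, sq_abs]

lemma lineMap_pt (a b r : ℝ) :
    (AffineMap.lineMap (pt 0 0) (pt a b) r : EuclideanSpace ℝ (Fin 2)) = pt (r*a) (r*b) := by
  ext i
  fin_cases i <;>
    simp [AffineMap.lineMap_apply, pt, PiLp.add_apply, PiLp.smul_apply, PiLp.sub_apply]

lemma arccos_antitone : Antitone Real.arccos := fun a b h => by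
  unfold Real.arccos
  have := Real.monotone_arcsin h
  linarith

lemma IsUnitSpeedGeodesicOn.mono' {X : Type*} [MetricSpace X] {γ : ℝ → X} {T T' : ℝ}
    (h : IsUnitSpeedGeodesicOn γ T) (hT' : T' ≤ T) : IsUnitSpeedGeodesicOn γ T' :=
  fun a ha b hb => h a ⟨ha.1, ha.2.trans hT'⟩ b ⟨hb.1, hb.2.trans hT'⟩

/-- Corollary 3.2, curvature `≤ 0` case: the angle is at most any
comparison angle. -/
theorem angle_le_compAngle_of_curvLe {X : Type*} [MetricSpace X]
    {U : Set X} (hU : IsCurvLeRegion U)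
    {T S : ℝ} (hT : 0 < T) (hS : 0 < S)
    (γ η : ℝ → X)
    (hγ : IsUnitSpeedGeodesicOn γ T) (hη : IsUnitSpeedGeodesicOn η S)
    (hγη : γ 0 = η 0)
    (hγU : ∀ t ∈ Set.Icc (0:ℝ) T, γ t ∈ U)
    (hηU : ∀ s ∈ Set.Icc (0:ℝ) S, η s ∈ U) :
    ∀ t ∈ Set.Ioc (0:ℝ) T, ∀ s ∈ Set.Ioc (0:ℝ) S,
      upperAngle γ η ≤ compAngle (γ 0) (γ t) (η s) := by
  intro t ht s hs
  have hdt : dist (γ 0) (γ t) = t := by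
    rw [hγ 0 ⟨le_refl 0, hT.le⟩ t ⟨ht.1.le, ht.2⟩]
    simp [abs_of_nonneg ht.1.le]
  have hds : dist (γ 0) (η s) = s := by
    rw [hγη, hη 0 ⟨le_refl 0, hS.le⟩ s ⟨hs.1.le, hs.2⟩]
    simp [abs_of_nonneg hs.1.le]
  set E := dist (γ t) (η s) with hEdef
  have hE0 : 0 ≤ E := dist_nonneg
  have hE1 : E ≤ t + s := by
    calc E ≤ dist (γ t) (γ 0) + dist (γ 0) (η s) := dist_triangle _ _ _
    _ = t + s := by rw [dist_comm (γ t) (γ 0), hdt, hds]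
  have hE2 : |t - s| ≤ E := by
    have h := abs_dist_sub_le (γ t) (η s) (γ 0)
    rwa [dist_comm (γ t) (γ 0), dist_comm (η s) (γ 0), hdt, hds] at h
  have h2ts : (0:ℝ) < 2 * t * s := by
    have := mul_pos (mul_pos two_pos ht.1) hs.1; linarith
  set Q := (t^2 + s^2 - E^2) / (2*t*s) with hQdef
  have hQ1 : -1 ≤ Q := by
    rw [hQdef, le_div_iff₀ h2ts]; nlinarith
  have hQ2 : Q ≤ 1 := by
    rw [hQdef, div_le_one h2ts]
    nlinarith [mul_self_le_mul_self (abs_nonneg (t-s)) hE2, sq_abs (t-s)]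
  set R := Real.sqrt (1 - Q^2) with hRdef
  have hR2 : R^2 = 1 - Q^2 := Real.sq_sqrt (by nlinarith)
  have h2tsQ : 2*t*s*Q = t^2 + s^2 - E^2 := by
    rw [hQdef, mul_div_assoc', mul_div_cancel_left₀ _ h2ts.ne']
  have hxy : dist (pt 0 0) (pt t 0) = t := by
    rw [dist_pt, show (0-t)^2 + ((0:ℝ)-0)^2 = t^2 by ring, Real.sqrt_sq ht.1.le]
  have hxz : dist (pt 0 0) (pt (s*Q) (s*R)) = s := by
    rw [dist_pt, show (0-s*Q)^2 + (0-s*R)^2 = s^2*(Q^2+R^2) by ring, hR2,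
      show s^2*(Q^2+(1-Q^2)) = s^2 by ring, Real.sqrt_sq hs.1.le]
  have hyz : dist (pt t 0) (pt (s*Q) (s*R)) = E := by
    rw [dist_pt, show (t-s*Q)^2 + ((0:ℝ)-s*R)^2 = t^2 - 2*t*s*Q + s^2*Q^2 + s^2*R^2 by ring,
      hR2, show t^2 - 2*t*s*Q + s^2*Q^2 + s^2*(1-Q^2) = t^2 + s^2 - 2*t*s*Q by ring, h2tsQ,
      show t^2 + s^2 - (t^2 + s^2 - E^2) = E^2 by ring, Real.sqrt_sq hE0]
  obtain ⟨g, hg1, hg2, hg3, hg4⟩ :=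
    hU.1 (γ t) (hγU t ⟨ht.1.le, ht.2⟩) (η s) (hηU s ⟨hs.1.le, hs.2⟩)
  have htri := hU.2 (γ 0) (hγU 0 ⟨le_refl 0, hT.le⟩) (γ t) (hγU t ⟨ht.1.le, ht.2⟩)
    (η s) (hηU s ⟨hs.1.le, hs.2⟩) ![γ, η, g] ?side
    (pt 0 0) (pt t 0) (pt (s*Q) (s*R))
    (hxy.trans hdt.symm) (hxz.trans hds.symm) hyz
  case side =>
    intro i
    fin_cases i
    · refine ⟨?_, rfl, ?_, ?_⟩ <;> simp only [Matrix.cons_val_zero, hdt]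
      · exact hγ.mono' ht.2
      · rfl
      · intro a ha; exact hγU a ⟨ha.1, ha.2.trans ht.2⟩
    · refine ⟨?_, ?_, ?_, ?_⟩ <;>
        simp only [Matrix.cons_val_one, Matrix.head_cons, Matrix.cons_val_zero, hds]
      · exact hη.mono' hs.2
      · exact hγη.symm
      · rfl
      · intro a ha; exact hηU a ⟨ha.1, ha.2.trans hs.2⟩
    · exact ⟨hg1, hg2, hg3, hg4⟩
  have key : ∀ t' ∈ Set.Ioc (0:ℝ) t, ∀ s' ∈ Set.Ioc (0:ℝ) s,
      compAngle (γ 0) (γ t') (η s') ≤ Real.arccos Q := by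
    intro t' ht' s' hs'
    have hle := htri 0 1 t' s'
      (by simp only [Matrix.cons_val_zero, hdt]; exact ⟨ht'.1.le, ht'.2⟩)
      (by simp only [Matrix.cons_val_one, Matrix.head_cons, hds]; exact ⟨hs'.1.le, hs'.2⟩)
    simp only [Matrix.cons_val_zero, Matrix.cons_val_one, Matrix.head_cons, hdt, hds] at hle
    rw [lineMap_pt, lineMap_pt, div_mul_cancel₀ _ ht.1.ne', mul_zero,
      show s'/s*(s*Q) = s'*Q by rw [← mul_assoc, div_mul_cancel₀ _ hs.1.ne'],
      show s'/s*(s*R) = s'*R by rw [← mul_assoc, div_mul_cancel₀ _ hs.1.ne']] at hle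
    have hd1 : dist (γ 0) (γ t') = t' := by
      rw [hγ 0 ⟨le_refl 0, hT.le⟩ t' ⟨ht'.1.le, ht'.2.trans ht.2⟩]
      simp [abs_of_nonneg ht'.1.le]
    have hd2 : dist (γ 0) (η s') = s' := by
      rw [hγη, hη 0 ⟨le_refl 0, hS.le⟩ s' ⟨hs'.1.le, hs'.2.trans hs.2⟩]
      simp [abs_of_nonneg hs'.1.le]
    set e := dist (γ t') (η s') with hedef
    have hX0 : 0 ≤ t'^2 + s'^2 - 2*t'*s'*Q := by
      nlinarith [sq_nonneg (t'-s'), mul_pos ht'.1 hs'.1]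
    have hcd : dist (pt t' 0) (pt (s'*Q) (s'*R)) = Real.sqrt (t'^2 + s'^2 - 2*t'*s'*Q) := by
      rw [dist_pt]
      congr 1
      linear_combination (s':ℝ)^2 * hR2
    rw [hcd] at hle
    have he2 : e^2 ≤ t'^2 + s'^2 - 2*t'*s'*Q := by
      calc e^2 ≤ Real.sqrt (t'^2 + s'^2 - 2*t'*s'*Q)^2 :=
            pow_le_pow_left₀ dist_nonneg hle 2
        _ = _ := Real.sq_sqrt hX0
    have h2 : (0:ℝ) < 2*t'*s' := by
      have := mul_pos (mul_pos two_pos ht'.1) hs'.1; linarith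
    have hQle : Q ≤ (t'^2 + s'^2 - e^2)/(2*t'*s') := by
      rw [le_div_iff₀ h2]; nlinarith
    unfold compAngle
    rw [hd1, hd2]
    exact arccos_antitone hQle
  have hC : compAngle (γ 0) (γ t) (η s) = Real.arccos Q := by
    unfold compAngle
    rw [hdt, hds]
  rw [hC]
  unfold upperAngle
  apply Filter.limsup_le_of_le
  · exact Filter.isCoboundedUnder_le_of_le _ (fun x => Real.arccos_nonneg _)
  · have h1 : ∀ᶠ a in 𝓝[>] (0:ℝ), a ∈ Set.Ioc 0 t :=
      Filter.eventually_iff.mpr (Ioc_mem_nhdsGT ht.1)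
    have h2 : ∀ᶠ a in 𝓝[>] (0:ℝ), a ∈ Set.Ioc 0 s :=
      Filter.eventually_iff.mpr (Ioc_mem_nhdsGT hs.1)
    filter_upwards [h1.prod_mk h2] with ts hts
    exact key ts.1 hts.1 ts.2 hts.2
end

section
/- Angle–comparison-angle inequality, lower curvature bound (Corollary 3.2, curvature ≥ 0 case). Let X be a metric space, let U ⊆ X be a region of curvature ≥ 0, and let γ : [0,T] → X and η : [0,S] → X be unit-speed geodesics with γ(0) = η(0) whose images are contained in U. Then for all t ∈ (0, T] and s ∈ (0, S], ∠⁺(γ, η) ≥ ∠⁰_{γ(0)}(γ(t), η(s)). (By Lemma 3.1 the angle ∠(γ, η) exists and equals ∠⁺(γ, η).) -/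
open Filter Topology Metric Set

noncomputable section AuxComp
namespace AuxComp

lemma arccos_anti {x y : ℝ} (h : x ≤ y) : Real.arccos y ≤ Real.arccos x := by
  unfold Real.arccos
  have := Real.monotone_arcsin h
  linarith

def pt (x y : ℝ) : EuclideanSpace ℝ (Fin 2) := (WithLp.equiv 2 (Fin 2 → ℝ)).symm ![x, y]

lemma dist_pt (x y x' y' : ℝ) :
    dist (pt x y) (pt x' y') = Real.sqrt ((x - x')^2 + (y - y')^2) := by
  rw [EuclideanSpace.dist_eq]
  simp [pt, Fin.sum_univ_two, Real.dist_eq, sq_abs]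

lemma lineMap_pt (x y x' y' c : ℝ) :
    AffineMap.lineMap (pt x y) (pt x' y') c = pt (x + c*(x'-x)) (y + c*(y'-y)) := by
  ext i
  fin_cases i <;>
    simp [pt, AffineMap.lineMap_apply] <;> ring

lemma geo_mono {X : Type*} [MetricSpace X] {γ : ℝ → X} {T T' : ℝ}
    (h : IsUnitSpeedGeodesicOn γ T) (hle : T' ≤ T) : IsUnitSpeedGeodesicOn γ T' :=
  fun a ha b hb => h a ⟨ha.1, ha.2.trans hle⟩ b ⟨hb.1, hb.2.trans hle⟩

set_option maxHeartbeats 1000000 in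
lemma key {X : Type*} [MetricSpace X]
    {U : Set X} (hU : IsCurvGeRegion U)
    {T S : ℝ}
    (γ η : ℝ → X)
    (hγ : IsUnitSpeedGeodesicOn γ T) (hη : IsUnitSpeedGeodesicOn η S)
    (hγη : γ 0 = η 0)
    (hγU : ∀ t ∈ Set.Icc (0:ℝ) T, γ t ∈ U)
    (hηU : ∀ s ∈ Set.Icc (0:ℝ) S, η s ∈ U)
    {t s t' s' : ℝ} (ht : t ∈ Set.Ioc (0:ℝ) T) (hs : s ∈ Set.Ioc (0:ℝ) S)
    (ht' : t' ∈ Set.Ioc (0:ℝ) t) (hs' : s' ∈ Set.Ioc (0:ℝ) s) :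
    compAngle (γ 0) (γ t) (η s) ≤ compAngle (γ 0) (γ t') (η s') := by
  have h0T : (0:ℝ) ∈ Set.Icc (0:ℝ) T := ⟨le_refl _, (ht.1.trans_le ht.2).le⟩
  have h0S : (0:ℝ) ∈ Set.Icc (0:ℝ) S := ⟨le_refl _, (hs.1.trans_le hs.2).le⟩
  have htT : t ∈ Set.Icc (0:ℝ) T := ⟨ht.1.le, ht.2⟩
  have hsS : s ∈ Set.Icc (0:ℝ) S := ⟨hs.1.le, hs.2⟩
  have ht'T : t' ∈ Set.Icc (0:ℝ) T := ⟨ht'.1.le, ht'.2.trans ht.2⟩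
  have hs'S : s' ∈ Set.Icc (0:ℝ) S := ⟨hs'.1.le, hs'.2.trans hs.2⟩
  have habs : ∀ r : ℝ, 0 ≤ r → |(0:ℝ) - r| = r := by
    intro r hr; rw [zero_sub, abs_neg, abs_of_nonneg hr]
  have hdxy : dist (γ 0) (γ t) = t := by rw [hγ 0 h0T t htT, habs t ht.1.le]
  have hdxz : dist (γ 0) (η s) = s := by
    rw [hγη, hη 0 h0S s hsS, habs s hs.1.le]
  have hdxt' : dist (γ 0) (γ t') = t' := by rw [hγ 0 h0T t' ht'T, habs t' ht'.1.le]
  have hdxs' : dist (γ 0) (η s') = s' := by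
    rw [hγη, hη 0 h0S s' hs'S, habs s' hs'.1.le]
  set c := dist (γ t) (η s) with hc
  have hc0 : 0 ≤ c := dist_nonneg
  have hcts : c ≤ t + s := by
    have h := dist_triangle (γ t) (γ 0) (η s)
    rw [dist_comm (γ t) (γ 0), hdxy, hdxz] at h; exact h
  have htsc : t ≤ s + c := by
    have h := dist_triangle (γ 0) (η s) (γ t)
    rw [hdxy, hdxz, dist_comm (η s) (γ t)] at h; exact h
  have hstc : s ≤ t + c := by
    have h := dist_triangle (γ 0) (γ t) (η s)
    rw [hdxy, hdxz] at h; exact h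
  set q := (t^2 + s^2 - c^2) / (2*t*s) with hqdef
  have h2ts : (0:ℝ) < 2*t*s := by have := ht.1; have := hs.1; positivity
  have hq1 : q ≤ 1 := by rw [hqdef, div_le_one h2ts]; nlinarith
  have hq1' : -1 ≤ q := by
    rw [hqdef, le_div_iff₀ h2ts]; nlinarith
  set θ := Real.arccos q with hθdef
  have hcosθ : Real.cos θ = q := Real.cos_arccos hq1' hq1
  have hsin : Real.sin θ ^ 2 + Real.cos θ ^ 2 = 1 := Real.sin_sq_add_cos_sq θ
  set xb := pt 0 0
  set yb := pt t 0
  set zb := pt (s * Real.cos θ) (s * Real.sin θ) with hzbdef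
  have hxy : dist xb yb = t := by
    rw [dist_pt]
    have : (0 - t)^2 + ((0:ℝ) - 0)^2 = t^2 := by ring
    rw [this, Real.sqrt_sq ht.1.le]
  have hxz : dist xb zb = s := by
    rw [dist_pt]
    have : (0 - s * Real.cos θ)^2 + (0 - s * Real.sin θ)^2 = s^2 := by
      linear_combination s^2 * hsin
    rw [this, Real.sqrt_sq hs.1.le]
  have hq2 : q * (2*t*s) = t^2 + s^2 - c^2 := by
    rw [hqdef]; exact div_mul_cancel₀ _ h2ts.ne'
  have hyz : dist yb zb = c := by
    rw [dist_pt]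
    have : (t - s * Real.cos θ)^2 + (0 - s * Real.sin θ)^2 = c^2 := by
      linear_combination s^2 * hsin - (2*t*s) * hcosθ - hq2
    rw [this, Real.sqrt_sq hc0]
  obtain ⟨g, hg, hg0, hgc, hgU⟩ := hU.1 (γ t) (hγU t htT) (η s) (hηU s hsS)
  have hcomp := hU.2 (γ 0) (hγU 0 h0T) (γ t) (hγU t htT) (η s) (hηU s hsS)
    ![γ, η, g] ?_ xb yb zb (hxy.trans hdxy.symm) (hxz.trans hdxz.symm) hyz
    0 1 t' s' ?_ ?_
  rotate_left
  · intro i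
    fin_cases i
    · refine ⟨?_, rfl, ?_, ?_⟩ <;>
        simp only [Matrix.cons_val_zero, hdxy]
      · exact geo_mono hγ ht.2
      · rfl
      · intro a ha; exact hγU a ⟨ha.1, ha.2.trans ht.2⟩
    · refine ⟨?_, ?_, ?_, ?_⟩ <;>
        simp only [Matrix.cons_val_one, Matrix.head_cons, hdxz]
      · exact geo_mono hη hs.2
      · exact hγη.symm
      · rfl
      · intro a ha; exact hηU a ⟨ha.1, ha.2.trans hs.2⟩
    · refine ⟨hg, hg0, hgc, hgU⟩
  · simp only [Matrix.cons_val_zero, hdxy]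
    exact ⟨ht'.1.le, ht'.2⟩
  · simp only [Matrix.cons_val_one, Matrix.head_cons, hdxz]
    exact ⟨hs'.1.le, hs'.2⟩
  simp only [Matrix.cons_val_zero, Matrix.cons_val_one, Matrix.head_cons,
    hdxy, hdxz] at hcomp
  have hlm1 : AffineMap.lineMap xb yb (t' / t) = pt t' 0 := by
    have ht0 : t ≠ 0 := ne_of_gt ht.1
    have e1 : (0:ℝ) + t'/t*(t-0) = t' := by
      rw [zero_add, sub_zero, div_mul_cancel₀ _ ht0]
    have e2 : (0:ℝ) + t'/t*(0-0) = 0 := by ring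
    rw [lineMap_pt, e1, e2]
  have hlm2 : AffineMap.lineMap xb zb (s' / s) =
      pt (s' * Real.cos θ) (s' * Real.sin θ) := by
    have hs0 : s ≠ 0 := ne_of_gt hs.1
    have e1 : (0:ℝ) + s'/s*(s*Real.cos θ-0) = s' * Real.cos θ := by
      rw [zero_add, sub_zero, ← mul_assoc, div_mul_cancel₀ _ hs0]
    have e2 : (0:ℝ) + s'/s*(s*Real.sin θ-0) = s' * Real.sin θ := by
      rw [zero_add, sub_zero, ← mul_assoc, div_mul_cancel₀ _ hs0]
    rw [hzbdef, lineMap_pt, e1, e2]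
  rw [hlm1, hlm2, dist_pt] at hcomp
  set D := dist (γ t') (η s') with hD
  have hD0 : 0 ≤ D := dist_nonneg
  have hE : (t' - s' * Real.cos θ)^2 + (0 - s' * Real.sin θ)^2
      = t'^2 + s'^2 - 2*t'*s'*Real.cos θ := by
    linear_combination s'^2 * hsin
  rw [hE] at hcomp
  have hE0 : 0 ≤ t'^2 + s'^2 - 2*t'*s'*Real.cos θ := by
    nlinarith [Real.cos_le_one θ, sq_nonneg (t' - s'), mul_pos ht'.1 hs'.1]
  have hD2 : t'^2 + s'^2 - 2*t'*s'*Real.cos θ ≤ D^2 := by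
    calc t'^2 + s'^2 - 2*t'*s'*Real.cos θ
        = Real.sqrt (t'^2 + s'^2 - 2*t'*s'*Real.cos θ) ^ 2 :=
          (Real.sq_sqrt hE0).symm
      _ ≤ D^2 := by
          apply pow_le_pow_left₀ (Real.sqrt_nonneg _) hcomp
  unfold compAngle
  rw [hdxy, hdxz, hdxt', hdxs', ← hc, ← hD, ← hqdef, ← hθdef]
  apply arccos_anti
  have h2t's' : (0:ℝ) < 2*t'*s' := by have := ht'.1; have := hs'.1; positivity
  rw [div_le_iff₀ h2t's', ← hcosθ]
  nlinarith [hD2]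

end AuxComp
end AuxComp

/-- Corollary 3.2, curvature `≥ 0` case: the angle is at least any
comparison angle. -/
theorem angle_ge_compAngle_of_curvGe {X : Type*} [MetricSpace X]
    {U : Set X} (hU : IsCurvGeRegion U)
    {T S : ℝ} (hT : 0 < T) (hS : 0 < S)
    (γ η : ℝ → X)
    (hγ : IsUnitSpeedGeodesicOn γ T) (hη : IsUnitSpeedGeodesicOn η S)
    (hγη : γ 0 = η 0)
    (hγU : ∀ t ∈ Set.Icc (0:ℝ) T, γ t ∈ U)
    (hηU : ∀ s ∈ Set.Icc (0:ℝ) S, η s ∈ U) :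
    ∀ t ∈ Set.Ioc (0:ℝ) T, ∀ s ∈ Set.Ioc (0:ℝ) S,
      compAngle (γ 0) (γ t) (η s) ≤ upperAngle γ η := by
  intro t ht s hs
  have hb : Filter.IsBoundedUnder (· ≤ ·) ((𝓝[>] (0:ℝ)) ×ˢ (𝓝[>] (0:ℝ)))
      (fun ts : ℝ × ℝ => compAngle (γ 0) (γ ts.1) (η ts.2)) :=
    Filter.isBoundedUnder_of ⟨Real.pi, fun _ => Real.arccos_le_pi _⟩
  refine Filter.le_limsup_of_frequently_le (Filter.Eventually.frequently ?_) hb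
  have h1 : Set.Ioc (0:ℝ) t ∈ 𝓝[>] (0:ℝ) := Ioc_mem_nhdsGT_of_mem ⟨le_refl 0, ht.1⟩
  have h2 : Set.Ioc (0:ℝ) s ∈ 𝓝[>] (0:ℝ) := Ioc_mem_nhdsGT_of_mem ⟨le_refl 0, hs.1⟩
  filter_upwards [Filter.prod_mem_prod h1 h2] with p hp
  exact AuxComp.key hU γ η hγ hη hγη hγU hηU ht hs hp.1 hp.2
end

section
/- Upper semicontinuity of angles under an upper curvature bound (Proposition 3.4, curvature ≤ 0 case). Let X be a proper metric space in which every pair of points is joined by a unit-speed shortest path and in which every point has a neighborhood that is a region of curvature ≤ 0. Let γₙ, γ : [0,T] → X and σₙ, σ : [0,S] → X (T, S > 0) be unit-speed geodesics with γₙ(0) = σₙ(0) for every n and γ(0) = σ(0), and suppose γₙ → γ uniformly on [0,T] and σₙ → σ uniformly on [0,S]. Then ∠⁺(γ, σ) ≥ limsup_{n→∞} ∠⁺(γₙ, σₙ). -/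
open Filter Topology Metric Set

noncomputable section AuxUSC

namespace AngleUSC

noncomputable def e2 (a b : ℝ) : EuclideanSpace ℝ (Fin 2) := (WithLp.equiv 2 (Fin 2 → ℝ)).symm ![a, b]

lemma dist_e2 (a b c d : ℝ) : dist (e2 a b) (e2 c d) = Real.sqrt ((a-c)^2 + (b-d)^2) := by
  rw [EuclideanSpace.dist_eq]
  simp [e2, Fin.sum_univ_two, Real.dist_eq, sq_abs]

lemma arccos_anti {x y : ℝ} (h : x ≤ y) : Real.arccos y ≤ Real.arccos x := by
  unfold Real.arccos
  have := Real.monotone_arcsin h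
  linarith

lemma exists_comp_triangle {d1 d2 d3 : ℝ} (h1 : 0 < d1) (h2 : 0 < d2) (h3 : 0 ≤ d3)
    (t1 : d3 ≤ d1 + d2) (t2 : d1 ≤ d2 + d3) (t3 : d2 ≤ d1 + d3) :
    ∃ xb yb zb : EuclideanSpace ℝ (Fin 2),
      dist xb yb = d1 ∧ dist xb zb = d2 ∧ dist yb zb = d3 := by
  set u : ℝ := (d1^2 + d2^2 - d3^2) / (2*d1) with hu
  have hv2 : 0 ≤ d2^2 - u^2 := by
    have key : 4*d1^2*(d2^2 - u^2) = ((d1+d2)^2 - d3^2) * (d3^2 - (d1-d2)^2) := by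
      rw [hu]
      field_simp
      ring
    have f1 : 0 ≤ (d1+d2)^2 - d3^2 := by nlinarith
    have f2 : 0 ≤ d3^2 - (d1-d2)^2 := by nlinarith
    nlinarith [mul_nonneg f1 f2, mul_pos h1 h1]
  set v : ℝ := Real.sqrt (d2^2 - u^2) with hv
  have hvsq : v^2 = d2^2 - u^2 := Real.sq_sqrt hv2
  refine ⟨e2 0 0, e2 d1 0, e2 u v, ?_, ?_, ?_⟩
  · rw [dist_e2]
    rw [show (0-d1)^2 + (0-0:ℝ)^2 = d1^2 by ring, Real.sqrt_sq h1.le]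
  · rw [dist_e2]
    rw [show (0-u)^2 + (0-v)^2 = d2^2 by nlinarith [hvsq], Real.sqrt_sq h2.le]
  · rw [dist_e2]
    have : (d1-u)^2 + (0-v)^2 = d3^2 := by
      have hu2 : 2*d1*u = d1^2+d2^2-d3^2 := by rw [hu]; field_simp
      linear_combination hvsq - hu2
    rw [this, Real.sqrt_sq h3]

lemma compAngle_eq_angle {p x y : EuclideanSpace ℝ (Fin 2)} (hx : x ≠ p) (hy : y ≠ p) :
    compAngle p x y = EuclideanGeometry.angle x p y := by
  have law := EuclideanGeometry.law_cos x p y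
  have hxp : dist x p ≠ 0 := dist_ne_zero.2 hx
  have hyp : dist y p ≠ 0 := dist_ne_zero.2 hy
  have : (dist p x ^ 2 + dist p y ^ 2 - dist x y ^ 2) / (2 * dist p x * dist p y)
      = Real.cos (EuclideanGeometry.angle x p y) := by
    rw [dist_comm p x, dist_comm p y]
    field_simp
    linear_combination -law
  rw [compAngle, this, Real.arccos_cos (EuclideanGeometry.angle_nonneg _ _ _)
    (EuclideanGeometry.angle_le_pi _ _ _)]

lemma angle_lineMap_lineMap (xb yb zb : EuclideanSpace ℝ (Fin 2)) {θ φ : ℝ}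
    (hθ : 0 < θ) (hφ : 0 < φ) :
    EuclideanGeometry.angle (AffineMap.lineMap xb yb θ) xb (AffineMap.lineMap xb zb φ) =
      EuclideanGeometry.angle yb xb zb := by
  unfold EuclideanGeometry.angle
  rw [AffineMap.lineMap_apply, AffineMap.lineMap_apply, vadd_vsub, vadd_vsub,
    InnerProductGeometry.angle_smul_left_of_pos _ _ hθ,
    InnerProductGeometry.angle_smul_right_of_pos _ _ hφ]

lemma compAngle_nonneg {X : Type*} [MetricSpace X] (p x y : X) : 0 ≤ compAngle p x y :=
  Real.arccos_nonneg _

lemma compAngle_le_pi {X : Type*} [MetricSpace X] (p x y : X) : compAngle p x y ≤ Real.pi :=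
  Real.arccos_le_pi _

lemma geo_mono {X : Type*} [MetricSpace X] {α : ℝ → X} {t T : ℝ}
    (hα : IsUnitSpeedGeodesicOn α T) (h : t ≤ T) : IsUnitSpeedGeodesicOn α t :=
  fun u hu u' hu' => hα u ⟨hu.1, hu.2.trans h⟩ u' ⟨hu'.1, hu'.2.trans h⟩

lemma dist_geo_zero {X : Type*} [MetricSpace X] {α : ℝ → X} {t T : ℝ}
    (hα : IsUnitSpeedGeodesicOn α T) (ht : t ∈ Icc (0:ℝ) T) : dist (α 0) (α t) = t := by
  have := hα 0 ⟨le_rfl, ht.1.trans ht.2⟩ t ht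
  rwa [zero_sub, abs_neg, abs_of_nonneg ht.1] at this

lemma compAngle_mono {X : Type*} [MetricSpace X] {U : Set X} (hU : IsCurvLeRegion U)
    {α β : ℝ → X} {t s : ℝ} (ht : 0 < t) (hs : 0 < s)
    (hα : IsUnitSpeedGeodesicOn α t) (hβ : IsUnitSpeedGeodesicOn β s)
    (h0 : α 0 = β 0)
    (hαU : ∀ u ∈ Icc (0:ℝ) t, α u ∈ U) (hβU : ∀ u ∈ Icc (0:ℝ) s, β u ∈ U)
    {t' s' : ℝ} (ht' : t' ∈ Ioc (0:ℝ) t) (hs' : s' ∈ Ioc (0:ℝ) s) :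
    compAngle (α 0) (α t') (β s') ≤ compAngle (α 0) (α t) (β s) := by
  have hd1 : dist (α 0) (α t) = t := dist_geo_zero hα ⟨ht.le, le_rfl⟩
  have hd2 : dist (α 0) (β s) = s := by rw [h0]; exact dist_geo_zero hβ ⟨hs.le, le_rfl⟩
  have hd1' : dist (α 0) (α t') = t' := dist_geo_zero hα ⟨ht'.1.le, ht'.2⟩
  have hd2' : dist (α 0) (β s') = s' := by rw [h0]; exact dist_geo_zero hβ ⟨hs'.1.le, hs'.2⟩
  have hxU : α 0 ∈ U := hαU 0 ⟨le_rfl, ht.le⟩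
  have hyU : α t ∈ U := hαU t ⟨ht.le, le_rfl⟩
  have hzU : β s ∈ U := hβU s ⟨hs.le, le_rfl⟩
  obtain ⟨w, hw1, hw2, hw3, hw4⟩ := hU.1 (α t) hyU (β s) hzU
  -- triangle inequalities
  have tri1 : dist (α t) (β s) ≤ t + s := by
    calc dist (α t) (β s) ≤ dist (α t) (α 0) + dist (α 0) (β s) := dist_triangle _ _ _
    _ = t + s := by rw [dist_comm, hd1, hd2]
  have tri2 : t ≤ s + dist (α t) (β s) := by
    calc t = dist (α 0) (α t) := hd1.symm
    _ ≤ dist (α 0) (β s) + dist (β s) (α t) := dist_triangle _ _ _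
    _ = s + dist (α t) (β s) := by rw [hd2, dist_comm]
  have tri3 : s ≤ t + dist (α t) (β s) := by
    calc s = dist (α 0) (β s) := hd2.symm
    _ ≤ dist (α 0) (α t) + dist (α t) (β s) := dist_triangle _ _ _
    _ = t + dist (α t) (β s) := by rw [hd1]
  obtain ⟨xb, yb, zb, e1, e2, e3⟩ :=
    exists_comp_triangle (d3 := dist (α t) (β s)) ht hs dist_nonneg tri1 tri2 tri3
  have e1' : dist xb yb = dist (α 0) (α t) := by rw [e1, hd1]
  have e2' : dist xb zb = dist (α 0) (β s) := by rw [e2, hd2]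
  have comp := hU.2 (α 0) hxU (α t) hyU (β s) hzU ![α, β, w] ?side xb yb zb e1' e2' e3
      0 1 t' s' ?ma ?mb
  case side =>
    intro i
    fin_cases i
    · refine ⟨?_, rfl, ?_, ?_⟩
      · show IsUnitSpeedGeodesicOn α (dist (α 0) (α t)); rw [hd1]; exact hα
      · show α (dist (α 0) (α t)) = α t; rw [hd1]
      · show ∀ u ∈ Icc (0:ℝ) (dist (α 0) (α t)), α u ∈ U; rw [hd1]; exact hαU
    · refine ⟨?_, ?_, ?_, ?_⟩
      · show IsUnitSpeedGeodesicOn β (dist (α 0) (β s)); rw [hd2]; exact hβ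
      · show β 0 = α 0; exact h0.symm
      · show β (dist (α 0) (β s)) = β s; rw [hd2]
      · show ∀ u ∈ Icc (0:ℝ) (dist (α 0) (β s)), β u ∈ U; rw [hd2]; exact hβU
    · exact ⟨hw1, hw2, hw3, hw4⟩
  case ma =>
    show t' ∈ Icc (0:ℝ) (dist (α 0) (α t)); rw [hd1]; exact ⟨ht'.1.le, ht'.2⟩
  case mb =>
    show s' ∈ Icc (0:ℝ) (dist (α 0) (β s)); rw [hd2]; exact ⟨hs'.1.le, hs'.2⟩
  simp only [Matrix.cons_val_zero, Matrix.cons_val_one, Matrix.head_cons] at comp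
  rw [hd1, hd2] at comp
  set ub := AffineMap.lineMap xb yb (t'/t) with hub
  set vb := AffineMap.lineMap xb zb (s'/s) with hvb
  have hθ : 0 < t'/t := div_pos ht'.1 ht
  have hφ : 0 < s'/s := div_pos hs'.1 hs
  have hdu : dist xb ub = t' := by
    rw [hub, dist_left_lineMap, e1, Real.norm_eq_abs, abs_of_pos hθ]
    field_simp
  have hdv : dist xb vb = s' := by
    rw [hvb, dist_left_lineMap, e2, Real.norm_eq_abs, abs_of_pos hφ]
    field_simp
  have hune : ub ≠ xb := by
    intro h; rw [h] at hdu; simp at hdu; exact ht'.1.ne' hdu.symm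
  have hvne : vb ≠ xb := by
    intro h; rw [h] at hdv; simp at hdv; exact hs'.1.ne' hdv.symm
  have hyne : yb ≠ xb := by
    intro h; rw [h, dist_self] at e1; exact ht.ne e1
  have hzne : zb ≠ xb := by
    intro h; rw [h, dist_self] at e2; exact hs.ne e2
  calc compAngle (α 0) (α t') (β s')
      = Real.arccos ((t'^2 + s'^2 - dist (α t') (β s')^2) / (2 * t' * s')) := by
        rw [compAngle, hd1', hd2']
    _ ≤ Real.arccos ((t'^2 + s'^2 - dist ub vb^2) / (2 * t' * s')) := by
        apply arccos_anti
        have hsq : dist (α t') (β s') ^ 2 ≤ dist ub vb ^ 2 :=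
          pow_le_pow_left₀ dist_nonneg comp 2
        have hpos : (0:ℝ) < 2 * t' * s' := mul_pos (mul_pos two_pos ht'.1) hs'.1
        exact (div_le_div_iff_of_pos_right hpos).mpr (by linarith)
    _ = compAngle xb ub vb := by rw [compAngle, hdu, hdv]
    _ = EuclideanGeometry.angle ub xb vb := compAngle_eq_angle hune hvne
    _ = EuclideanGeometry.angle yb xb zb := angle_lineMap_lineMap _ _ _ hθ hφ
    _ = compAngle xb yb zb := (compAngle_eq_angle hyne hzne).symm
    _ = compAngle (α 0) (α t) (β s) := by rw [compAngle, compAngle, e1', e2', e3]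

end AngleUSC

end AuxUSC

namespace AngleUSC

lemma upperAngle_le_compAngle {X : Type*} [MetricSpace X] {U : Set X} (hU : IsCurvLeRegion U)
    {α β : ℝ → X} {t s : ℝ} (ht : 0 < t) (hs : 0 < s)
    (hα : IsUnitSpeedGeodesicOn α t) (hβ : IsUnitSpeedGeodesicOn β s) (h0 : α 0 = β 0)
    (hαU : ∀ u ∈ Icc (0:ℝ) t, α u ∈ U) (hβU : ∀ u ∈ Icc (0:ℝ) s, β u ∈ U) :
    upperAngle α β ≤ compAngle (α 0) (α t) (β s) := by
  refine Filter.limsup_le_of_le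
    (Filter.isCoboundedUnder_le_of_le _ (fun ts => compAngle_nonneg _ _ _)) ?_
  · filter_upwards [Filter.prod_mem_prod (Ioc_mem_nhdsGT ht)
      (Ioc_mem_nhdsGT hs)] with ts hts
    exact compAngle_mono hU ht hs hα hβ h0 hαU hβU hts.1 hts.2

lemma upperAngle_nonneg {X : Type*} [MetricSpace X] (α β : ℝ → X) : 0 ≤ upperAngle α β := by
  refine Filter.le_limsup_of_frequently_le
    (Filter.Eventually.frequently
      (Filter.Eventually.of_forall fun ts => compAngle_nonneg _ _ _))
    (Filter.isBoundedUnder_of ⟨Real.pi, fun ts => compAngle_le_pi _ _ _⟩)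

end AngleUSC

open AngleUSC in
/-- Proposition 3.4, curvature `≤ 0` case: upper semicontinuity of angles. -/
theorem angle_upper_semicontinuous_of_curvLe {X : Type*} [MetricSpace X]
    [ProperSpace X]
    (hgeo : ∀ x y : X, ∃ γ : ℝ → X, IsUnitSpeedGeodesicOn γ (dist x y) ∧
      γ 0 = x ∧ γ (dist x y) = y)
    (hcurv : ∀ p : X, ∃ U ∈ 𝓝 p, IsCurvLeRegion U)
    {T S : ℝ} (hT : 0 < T) (hS : 0 < S)
    (γn : ℕ → ℝ → X) (γ : ℝ → X) (σn : ℕ → ℝ → X) (σ : ℝ → X)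
    (hγn : ∀ n, IsUnitSpeedGeodesicOn (γn n) T)
    (hγ : IsUnitSpeedGeodesicOn γ T)
    (hσn : ∀ n, IsUnitSpeedGeodesicOn (σn n) S)
    (hσ : IsUnitSpeedGeodesicOn σ S)
    (h0n : ∀ n, γn n 0 = σn n 0) (h0 : γ 0 = σ 0)
    (hγconv : TendstoUniformlyOn (fun n u => γn n u) γ atTop (Set.Icc 0 T))
    (hσconv : TendstoUniformlyOn (fun n u => σn n u) σ atTop (Set.Icc 0 S)) :
    Filter.limsup (fun n => upperAngle (γn n) (σn n)) atTop
      ≤ upperAngle γ σ := by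
  obtain ⟨U, hUn, hU⟩ := hcurv (γ 0)
  obtain ⟨r, hr, hrU⟩ := Metric.mem_nhds_iff.1 hUn
  set t₀ : ℝ := min T (r/3) with ht₀def
  set s₀ : ℝ := min S (r/3) with hs₀def
  have ht₀ : 0 < t₀ := lt_min hT (by linarith)
  have hs₀ : 0 < s₀ := lt_min hS (by linarith)
  set L : ℝ := Filter.limsup (fun n => upperAngle (γn n) (σn n)) atTop with hL
  have main : ∀ t ∈ Ioc (0:ℝ) t₀, ∀ s ∈ Ioc (0:ℝ) s₀, L ≤ compAngle (γ 0) (γ t) (σ s) := by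
    intro t ht s hs
    have htT : t ≤ T := ht.2.trans (min_le_left _ _)
    have hsS : s ≤ S := hs.2.trans (min_le_left _ _)
    have htr : t ≤ r/3 := ht.2.trans (min_le_right _ _)
    have hsr : s ≤ r/3 := hs.2.trans (min_le_right _ _)
    have hγe := Metric.tendstoUniformlyOn_iff.1 hγconv (r/3) (by linarith)
    have hσe := Metric.tendstoUniformlyOn_iff.1 hσconv (r/3) (by linarith)
    have hev : ∀ᶠ n in atTop, upperAngle (γn n) (σn n) ≤
        compAngle (γn n 0) (γn n t) (σn n s) := by
      filter_upwards [hγe, hσe] with n hγn' hσn'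
      have hmemγ : ∀ u ∈ Icc (0:ℝ) t, γn n u ∈ U := by
        intro u hu
        have huT : u ∈ Icc (0:ℝ) T := ⟨hu.1, hu.2.trans htT⟩
        have h1 : dist (γ u) (γn n u) < r/3 := hγn' u huT
        have h2 : dist (γ u) (γ 0) = u := by
          rw [dist_comm]; exact dist_geo_zero hγ huT
        apply hrU
        have : dist (γn n u) (γ 0) < r := by
          calc dist (γn n u) (γ 0) ≤ dist (γn n u) (γ u) + dist (γ u) (γ 0) :=
            dist_triangle _ _ _
          _ < r/3 + u := by rw [dist_comm] at h1; rw [h2]; linarith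
          _ ≤ r := by linarith [hu.2]
        exact this
      have hmemσ : ∀ u ∈ Icc (0:ℝ) s, σn n u ∈ U := by
        intro u hu
        have huS : u ∈ Icc (0:ℝ) S := ⟨hu.1, hu.2.trans hsS⟩
        have h1 : dist (σ u) (σn n u) < r/3 := hσn' u huS
        have h2 : dist (σ u) (σ 0) = u := by
          rw [dist_comm]; exact dist_geo_zero hσ huS
        apply hrU
        have : dist (σn n u) (γ 0) < r := by
          calc dist (σn n u) (γ 0) ≤ dist (σn n u) (σ u) + dist (σ u) (σ 0) + dist (σ 0) (γ 0) :=
            dist_triangle4 _ _ _ _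
          _ < r/3 + u + 0 := by
              rw [dist_comm] at h1; rw [h2, h0, dist_self]; linarith
          _ ≤ r := by linarith [hu.2]
        exact this
      exact upperAngle_le_compAngle hU ht.1 hs.1 (geo_mono (hγn n) htT)
        (geo_mono (hσn n) hsS) (h0n n) hmemγ hmemσ
    have hd1 : ∀ n, dist (γn n 0) (γn n t) = t :=
      fun n => dist_geo_zero (hγn n) ⟨ht.1.le, htT⟩
    have hd2 : ∀ n, dist (γn n 0) (σn n s) = s := by
      intro n; rw [h0n n]; exact dist_geo_zero (hσn n) ⟨hs.1.le, hsS⟩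
    have hgd1 : dist (γ 0) (γ t) = t := dist_geo_zero hγ ⟨ht.1.le, htT⟩
    have hgd2 : dist (γ 0) (σ s) = s := by
      rw [h0]; exact dist_geo_zero hσ ⟨hs.1.le, hsS⟩
    have hdist : Tendsto (fun n => dist (γn n t) (σn n s)) atTop
        (𝓝 (dist (γ t) (σ s))) :=
      (hγconv.tendsto_at ⟨ht.1.le, htT⟩).dist (hσconv.tendsto_at ⟨hs.1.le, hsS⟩)
    have hcont : Continuous (fun c : ℝ => Real.arccos ((t^2 + s^2 - c^2) / (2*t*s))) := by
      apply Real.continuous_arccos.comp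
      exact (continuous_const.sub (continuous_pow 2)).div_const _
    have htend : Tendsto (fun n => compAngle (γn n 0) (γn n t) (σn n s)) atTop
        (𝓝 (compAngle (γ 0) (γ t) (σ s))) := by
      have heq : (fun n => compAngle (γn n 0) (γn n t) (σn n s)) =
          fun n => Real.arccos ((t^2 + s^2 - dist (γn n t) (σn n s)^2) / (2*t*s)) := by
        funext n; rw [compAngle, hd1 n, hd2 n]
      have heq2 : compAngle (γ 0) (γ t) (σ s) =
          Real.arccos ((t^2 + s^2 - dist (γ t) (σ s)^2) / (2*t*s)) := by
        rw [compAngle, hgd1, hgd2]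
      rw [heq, heq2]
      exact (hcont.tendsto _).comp hdist
    calc L ≤ Filter.limsup (fun n => compAngle (γn n 0) (γn n t) (σn n s)) atTop := by
          refine Filter.limsup_le_limsup hev ?_ ?_
          · exact Filter.isCoboundedUnder_le_of_le _ (fun n => upperAngle_nonneg _ _)
          · exact htend.isBoundedUnder_le
      _ = compAngle (γ 0) (γ t) (σ s) := htend.limsup_eq
  have hfreq : ∃ᶠ ts : ℝ × ℝ in (𝓝[>] (0:ℝ)) ×ˢ (𝓝[>] (0:ℝ)),
      L ≤ compAngle (γ 0) (γ ts.1) (σ ts.2) := by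
    apply Filter.Eventually.frequently
    filter_upwards [Filter.prod_mem_prod (Ioc_mem_nhdsGT ht₀)
      (Ioc_mem_nhdsGT hs₀)] with ts hts
    exact main ts.1 hts.1 ts.2 hts.2
  exact Filter.le_limsup_of_frequently_le hfreq
    (Filter.isBoundedUnder_of ⟨Real.pi, fun ts => compAngle_le_pi _ _ _⟩)
end

section
/- Upper bound in the first variation formula for distance to a point (Lemma 4.1). Let X be a metric space, let γ : [0,T] → X (T > 0) be a unit-speed geodesic, and let p ∈ X with p ≠ γ(0). Suppose there exists at least one unit-speed shortest path from γ(0) to p, i.e. a unit-speed geodesic η : [0, dist(γ(0), p)] → X with η(0) = γ(0) and η(dist(γ(0), p)) = p. Let A := inf { ∠⁺(γ, η) : η a unit-speed shortest path from γ(0) to p }. Then limsup_{t→0⁺} (dist(γ(t), p) − dist(γ(0), p))/t ≤ −cos A. -/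
open Filter Topology Metric Set

lemma lipcos (a b : ℝ) : |Real.cos a - Real.cos b| ≤ |a - b| := by
  rw [Real.cos_sub_cos]
  have h1 : |Real.sin ((a+b)/2)| ≤ 1 := Real.abs_sin_le_one _
  have h2 : |Real.sin ((a-b)/2)| ≤ |(a-b)/2| := Real.abs_sin_le_abs
  have h3 : |(a-b)/2| = |a-b|/2 := by rw [abs_div]; norm_num
  rw [abs_mul, abs_mul, abs_neg]
  have h0 : |Real.sin ((a-b)/2)| ≥ 0 := abs_nonneg _
  have h4 : |Real.sin ((a+b)/2)| ≥ 0 := abs_nonneg _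
  calc |(2:ℝ)| * |Real.sin ((a+b)/2)| * |Real.sin ((a-b)/2)|
      ≤ |(2:ℝ)| * 1 * (|a-b|/2) := by
        apply mul_le_mul (mul_le_mul le_rfl h1 h4 (abs_nonneg _)) (h3 ▸ h2) h0
        positivity
    _ = |a - b| := by rw [abs_two]; ring

lemma real_core {t s r c d dp : ℝ} (ht : 0 < t) (hs : 0 < s)
    (hc1 : c ≤ 1) (hd0 : 0 ≤ d) (hd2 : d^2 = t^2 + s^2 - 2*t*s*c)
    (htri : dp ≤ d + (r - s)) : (dp - r)/t ≤ -c + t/(2*s) := by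
  have h2s : (0:ℝ) < 2*s := by linarith
  have hu : t^2/(2*s) * (2*s) = t^2 := div_mul_cancel₀ _ (ne_of_gt h2s)
  have hRHS : 0 ≤ s - t*c + t^2/(2*s) := by
    nlinarith [sq_nonneg (s - t), sq_nonneg s,
      mul_nonneg (mul_nonneg ht.le (by linarith : (0:ℝ) ≤ 1 - c)) hs.le]
  have hsq : (s - t*c + t^2/(2*s))^2 - d^2 = (t*c - t^2/(2*s))^2 := by
    rw [hd2]; field_simp; ring
  have hkey : d ≤ s - t*c + t^2/(2*s) := by
    nlinarith [sq_nonneg (t*c - t^2/(2*s)), hsq, hd0, hRHS]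
  rw [div_le_iff₀ ht]
  have hring : (-c + t/(2*s)) * t = -(t*c) + t^2/(2*s) := by ring
  rw [hring]
  linarith

lemma prodF_neBot : ((𝓝[>] (0:ℝ)) ×ˢ (𝓝[>] (0:ℝ))).NeBot :=
  Filter.prod_neBot.mpr ⟨inferInstance, inferInstance⟩

lemma upperAngle_nonneg {X : Type*} [MetricSpace X] (γ η : ℝ → X) :
    0 ≤ upperAngle γ η := by
  haveI := prodF_neBot
  exact Filter.le_limsup_of_frequently_le
    ((Filter.Eventually.of_forall fun ts => Real.arccos_nonneg _).frequently)
    (Filter.isBoundedUnder_of ⟨Real.pi, fun ts => Real.arccos_le_pi _⟩)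

lemma upperAngle_le_pi {X : Type*} [MetricSpace X] (γ η : ℝ → X) :
    upperAngle γ η ≤ Real.pi := by
  haveI := prodF_neBot
  exact Filter.limsup_le_of_le
    (Filter.isCoboundedUnder_le_of_le _ fun ts => Real.arccos_nonneg _)
    (Filter.Eventually.of_forall fun ts => Real.arccos_le_pi _)

lemma per_path {X : Type*} [MetricSpace X] {T : ℝ} (hT : 0 < T)
    {γ : ℝ → X} (hγ : IsUnitSpeedGeodesicOn γ T)
    {p : X} (hp : p ≠ γ 0)
    {η : ℝ → X} (hη : IsUnitSpeedGeodesicOn η (dist (γ 0) p))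
    (h0 : η 0 = γ 0) (h1 : η (dist (γ 0) p) = p)
    {ε : ℝ} (hε : 0 < ε) :
    Filter.limsup (fun t : ℝ => (dist (γ t) p - dist (γ 0) p) / t) (𝓝[>] (0:ℝ))
      ≤ -Real.cos (upperAngle γ η) + ε := by
  haveI := prodF_neBot
  have hr : 0 < dist (γ 0) p := dist_pos.mpr (Ne.symm hp)
  have hA0 : 0 ≤ upperAngle γ η := upperAngle_nonneg γ η
  have hAπ : upperAngle γ η ≤ Real.pi := upperAngle_le_pi γ η
  have hev : ∀ᶠ ts in (𝓝[>] (0:ℝ)) ×ˢ (𝓝[>] (0:ℝ)),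
      compAngle (γ 0) (γ ts.1) (η ts.2) < upperAngle γ η + ε/2 := by
    apply Filter.eventually_lt_of_limsup_lt
    · show upperAngle γ η < upperAngle γ η + ε/2
      linarith
    · exact Filter.isBoundedUnder_of ⟨Real.pi, fun ts => Real.arccos_le_pi _⟩
  have hmem : ∀ᶠ ts in (𝓝[>] (0:ℝ)) ×ˢ (𝓝[>] (0:ℝ)),
      ts.1 ∈ Set.Ioc (0:ℝ) T ∧ ts.2 ∈ Set.Ioc (0:ℝ) (dist (γ 0) p) := by
    have := Filter.prod_mem_prod (Ioc_mem_nhdsGT hT) (Ioc_mem_nhdsGT hr)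
    exact Filter.mem_of_superset this fun ts h => ⟨h.1, h.2⟩
  rw [Filter.eventually_prod_iff] at hev hmem
  obtain ⟨pa, hpa, pb, hpb, himp⟩ := hev
  obtain ⟨qa, hqa, qb, hqb, qimp⟩ := hmem
  obtain ⟨s₀, hs₀p, hs₀q⟩ := (hpb.and hqb).exists
  have hbound : ∀ᶠ t in 𝓝[>] (0:ℝ),
      (dist (γ t) p - dist (γ 0) p) / t
        ≤ (-Real.cos (upperAngle γ η) + ε/2) + t / (2 * s₀) := by
    filter_upwards [hpa, hqa] with t hpat hqat
    obtain ⟨⟨ht0, htT⟩, hs0, hsr⟩ := qimp hqat hs₀q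
    have hθlt : compAngle (γ 0) (γ t) (η s₀) < upperAngle γ η + ε/2 := himp hpat hs₀p
    have hθ0 : 0 ≤ compAngle (γ 0) (γ t) (η s₀) := Real.arccos_nonneg _
    have dγ : dist (γ 0) (γ t) = t := by
      rw [hγ 0 ⟨le_refl 0, hT.le⟩ t ⟨ht0.le, htT⟩, abs_of_nonpos (by linarith)]; ring
    have dη : dist (γ 0) (η s₀) = s₀ := by
      rw [← h0, hη 0 ⟨le_refl 0, hr.le⟩ s₀ ⟨hs0.le, hsr⟩, abs_of_nonpos (by linarith)]; ring
    have dηp : dist (η s₀) p = dist (γ 0) p - s₀ := by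
      conv_lhs => rw [← h1]
      rw [hη s₀ ⟨hs0.le, hsr⟩ (dist (γ 0) p) ⟨hr.le, le_refl _⟩,
        abs_of_nonpos (by linarith)]; ring
    have hd0 : (0:ℝ) ≤ dist (γ t) (η s₀) := dist_nonneg
    have hd_le : dist (γ t) (η s₀) ≤ t + s₀ := by
      calc dist (γ t) (η s₀) ≤ dist (γ t) (γ 0) + dist (γ 0) (η s₀) := dist_triangle _ _ _
        _ = t + s₀ := by rw [dist_comm, dγ, dη]
    have hd_ge1 : t - s₀ ≤ dist (γ t) (η s₀) := by
      have := dist_triangle (γ 0) (η s₀) (γ t)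
      rw [dη, dist_comm (η s₀) (γ t)] at this; rw [dγ] at this; linarith
    have hd_ge2 : s₀ - t ≤ dist (γ t) (η s₀) := by
      have := dist_triangle (γ 0) (γ t) (η s₀)
      rw [dγ, dη] at this; linarith
    have hts : (0:ℝ) < 2*t*s₀ := by positivity
    have hq1 : -1 ≤ (t^2 + s₀^2 - dist (γ t) (η s₀)^2) / (2*t*s₀) := by
      rw [le_div_iff₀ hts]
      nlinarith [sq_nonneg (t + s₀ - dist (γ t) (η s₀))]
    have hq2 : (t^2 + s₀^2 - dist (γ t) (η s₀)^2) / (2*t*s₀) ≤ 1 := by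
      rw [div_le_one hts]
      nlinarith [mul_nonneg (by linarith : (0:ℝ) ≤ dist (γ t) (η s₀) - (t - s₀))
        (by linarith : (0:ℝ) ≤ dist (γ t) (η s₀) + (t - s₀))]
    have hcos : Real.cos (compAngle (γ 0) (γ t) (η s₀))
        = (t^2 + s₀^2 - dist (γ t) (η s₀)^2) / (2*t*s₀) := by
      rw [compAngle, dγ, dη]
      exact Real.cos_arccos hq1 hq2
    have hcos1 : Real.cos (compAngle (γ 0) (γ t) (η s₀)) ≤ 1 := Real.cos_le_one _
    have hd2 : dist (γ t) (η s₀)^2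
        = t^2 + s₀^2 - 2*t*s₀*Real.cos (compAngle (γ 0) (γ t) (η s₀)) := by
      have hc' : Real.cos (compAngle (γ 0) (γ t) (η s₀)) * (2*t*s₀)
          = t^2 + s₀^2 - dist (γ t) (η s₀)^2 := by
        rw [hcos, div_mul_cancel₀ _ (ne_of_gt hts)]
      linear_combination hc'
    have htri : dist (γ t) p ≤ dist (γ t) (η s₀) + (dist (γ 0) p - s₀) := by
      have := dist_triangle (γ t) (η s₀) p
      rw [dηp] at this; linarith
    have hcore := real_core ht0 hs0 hcos1 hd0 hd2 htri
    have hcA : Real.cos (upperAngle γ η) - ε/2 ≤ Real.cos (compAngle (γ 0) (γ t) (η s₀)) := by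
      rcases le_or_gt (compAngle (γ 0) (γ t) (η s₀)) (upperAngle γ η) with h | h
      · have := Real.cos_le_cos_of_nonneg_of_le_pi hθ0 hAπ h
        linarith
      · have hl := lipcos (compAngle (γ 0) (γ t) (η s₀)) (upperAngle γ η)
        rw [abs_of_pos (by linarith : (0:ℝ) < compAngle (γ 0) (γ t) (η s₀) - upperAngle γ η)] at hl
        have h2 := (abs_le.mp hl).1
        linarith
    linarith
  have htend : Filter.Tendsto (fun t : ℝ => (-Real.cos (upperAngle γ η) + ε/2) + t / (2 * s₀))
      (𝓝[>] (0:ℝ)) (𝓝 ((-Real.cos (upperAngle γ η) + ε/2) + 0)) := by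
    apply Filter.Tendsto.const_add
    have h := (continuous_id.div_const (2*s₀)).tendsto (0:ℝ)
    rw [show (id (0:ℝ)) / (2*s₀) = 0 by simp] at h
    exact h.mono_left nhdsWithin_le_nhds
  have hcob : Filter.IsCoboundedUnder (· ≤ ·) (𝓝[>] (0:ℝ))
      (fun t : ℝ => (dist (γ t) p - dist (γ 0) p) / t) := by
    apply Filter.IsBoundedUnder.isCoboundedUnder_le (α := ℝ)
    refine ⟨-1, ?_⟩
    rw [Filter.eventually_map]
    filter_upwards [Ioc_mem_nhdsGT hT] with t ht
    have dγ : dist (γ 0) (γ t) = t := by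
      rw [hγ 0 ⟨le_refl 0, hT.le⟩ t ⟨ht.1.le, ht.2⟩, abs_of_nonpos (by linarith [ht.1])]; ring
    have h1' : dist (γ 0) p ≤ t + dist (γ t) p := by
      have := dist_triangle (γ 0) (γ t) p
      rw [dγ] at this; linarith
    show -1 ≤ (dist (γ t) p - dist (γ 0) p) / t
    rw [le_div_iff₀ ht.1]; linarith
  calc Filter.limsup (fun t : ℝ => (dist (γ t) p - dist (γ 0) p) / t) (𝓝[>] (0:ℝ))
      ≤ Filter.limsup (fun t : ℝ => (-Real.cos (upperAngle γ η) + ε/2) + t / (2 * s₀))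
          (𝓝[>] (0:ℝ)) :=
        Filter.limsup_le_limsup hbound hcob htend.isBoundedUnder_le
    _ = (-Real.cos (upperAngle γ η) + ε/2) + 0 := htend.limsup_eq
    _ ≤ -Real.cos (upperAngle γ η) + ε := by linarith

/-- Lemma 4.1: upper bound in the first variation formula for the distance
to a point. -/
theorem limsup_dist_quotient_le_neg_cos {X : Type*} [MetricSpace X]
    {T : ℝ} (hT : 0 < T)
    (γ : ℝ → X) (hγ : IsUnitSpeedGeodesicOn γ T)
    (p : X) (hp : p ≠ γ 0)
    (hex : ∃ η : ℝ → X, IsUnitSpeedGeodesicOn η (dist (γ 0) p) ∧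
      η 0 = γ 0 ∧ η (dist (γ 0) p) = p) :
    Filter.limsup (fun t : ℝ => (dist (γ t) p - dist (γ 0) p) / t) (𝓝[>] (0:ℝ))
      ≤ -Real.cos (sInf {a : ℝ | ∃ η : ℝ → X,
          IsUnitSpeedGeodesicOn η (dist (γ 0) p) ∧
          η 0 = γ 0 ∧ η (dist (γ 0) p) = p ∧ a = upperAngle γ η}) := by
  set S := {a : ℝ | ∃ η : ℝ → X,
      IsUnitSpeedGeodesicOn η (dist (γ 0) p) ∧
      η 0 = γ 0 ∧ η (dist (γ 0) p) = p ∧ a = upperAngle γ η} with hSdef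
  obtain ⟨η, hη, h0, h1⟩ := hex
  have hne : S.Nonempty := ⟨upperAngle γ η, η, hη, h0, h1, rfl⟩
  have hbdd : ∀ a ∈ S, (0:ℝ) ≤ a := by
    rintro a ⟨η', -, -, -, rfl⟩; exact upperAngle_nonneg γ η'
  have main : ∀ ε : ℝ, 0 < ε →
      Filter.limsup (fun t : ℝ => (dist (γ t) p - dist (γ 0) p) / t) (𝓝[>] (0:ℝ))
        ≤ -Real.cos (sInf S) + ε := by
    intro ε hε
    obtain ⟨a, haS, halt⟩ := Real.lt_sInf_add_pos hne (half_pos hε)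
    obtain ⟨η', hη', h0', h1', rfl⟩ := haS
    have h2 := per_path hT hγ hp hη' h0' h1' (half_pos hε)
    have hsle : sInf S ≤ upperAngle γ η' :=
      csInf_le ⟨0, fun x hx => hbdd x hx⟩ ⟨η', hη', h0', h1', rfl⟩
    have hl := lipcos (sInf S) (upperAngle γ η')
    rw [abs_of_nonpos (by linarith : sInf S - upperAngle γ η' ≤ 0)] at hl
    have h3 := (abs_le.mp hl).2
    linarith
  by_contra hcon
  push_neg at hcon
  have h4 := main ((Filter.limsup (fun t : ℝ => (dist (γ t) p - dist (γ 0) p) / t)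
      (𝓝[>] (0:ℝ)) - (-Real.cos (sInf S))) / 2) (by linarith)
  linarith
end
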